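/- arXiv:1901.02670 — 7 statements merged into one kernel-verified Lean document; each statement's English description precedes it below -/
import Mathlib

section
/- Let 0 ≤ β < 1, α ∈ (−π, π], and let f be analytic on the open unit disc Δ with f(0) = 0, f'(0) = 1, satisfying Re(f'(z) + ((1+e^{iα})/2)·z·f''(z)) > β for all z ∈ Δ. Then Re(f'(z)) > β for all z ∈ Δ. -/
open Complex Metric Real

theorem R_alpha_beta_deriv_re (β α : ℝ) (hβ : 0 ≤ β ∧ β < 1) (hα : -π < α ∧ α ≤ π)
    (f : ℂ → ℂ) (hf : DifferentiableOn ℂ f (Metric.ball (0 : ℂ) 1))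
    (hf0 : f 0 = 0) (hf1 : deriv f 0 = 1)
    (hcond : ∀ z ∈ Metric.ball (0 : ℂ) 1,
      β < (deriv f z + ((1 + Complex.exp (α * Complex.I)) / 2) * z * deriv (deriv f) z).re) :
    ∀ z ∈ Metric.ball (0 : ℂ) 1, β < (deriv f z).re := by
  by_contra hcon
  push_neg at hcon
  obtain ⟨z1, hz1, hz1le⟩ := hcon
  set p : ℂ → ℂ := deriv f with hp_def
  have hpan : AnalyticOnNhd ℂ p (Metric.ball (0:ℂ) 1) :=
    (hf.analyticOnNhd isOpen_ball).deriv
  have hp : DifferentiableOn ℂ p (Metric.ball (0:ℂ) 1) := hpan.differentiableOn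
  have hpAt : ∀ z ∈ Metric.ball (0:ℂ) 1, DifferentiableAt ℂ p z := fun z hz =>
    (hp z hz).differentiableAt (isOpen_ball.mem_nhds hz)
  -- choose radius r
  set r : ℝ := (‖z1‖ + 1) / 2 with hr_def
  have hz1lt : ‖z1‖ < 1 := by simpa using hz1
  have hr0 : 0 < r := by positivity
  have hrlt : r < 1 := by simp only [hr_def]; linarith
  have hz1r : ‖z1‖ ≤ r := by simp only [hr_def]; linarith
  have hsub : Metric.closedBall (0:ℂ) r ⊆ Metric.ball (0:ℂ) 1 := by
    apply Metric.closedBall_subset_ball hrlt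
  -- min of Re p on closed ball r
  have hK : IsCompact (Metric.closedBall (0:ℂ) r) := isCompact_closedBall _ _
  have hcont : ContinuousOn (fun z => (p z).re) (Metric.closedBall (0:ℂ) r) :=
    Complex.continuous_re.comp_continuousOn ((hp.mono hsub).continuousOn)
  obtain ⟨z0, hz0K, hz0min⟩ := hK.exists_isMinOn (Metric.nonempty_closedBall.2 hr0.le) hcont
  have hz0lt1 : z0 ∈ Metric.ball (0:ℂ) 1 := hsub hz0K
  have hz1K : z1 ∈ Metric.closedBall (0:ℂ) r := by
    simpa [Metric.mem_closedBall, dist_eq_norm] using hz1r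
  have h0K : (0:ℂ) ∈ Metric.closedBall (0:ℂ) r := by simp [hr0.le]
  have hmin_le : (p z0).re ≤ β := le_trans (hz0min hz1K) hz1le
  have hp0 : (p 0).re = 1 := by rw [hf1]; simp
  -- z0 is on the sphere
  have hz0r : ‖z0‖ = r := by
    by_contra hne
    have hz0ball : z0 ∈ Metric.ball (0:ℂ) r := by
      rcases lt_or_eq_of_le (by simpa [Metric.mem_closedBall, dist_eq_norm] using hz0K) with h | h
      · simpa [Metric.mem_ball, dist_eq_norm] using h
      · exact absurd h hne
    -- interior minimum: use max modulus for exp(-p)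
    set g : ℂ → ℂ := fun z => Complex.exp (-p z) with hg_def
    have hgd : DifferentiableOn ℂ g (Metric.ball (0:ℂ) r) :=
      ((hp.mono (Metric.ball_subset_ball hrlt.le)).neg).cexp
    have hmax : IsMaxOn (norm ∘ g) (Metric.ball (0:ℂ) r) z0 := by
      intro z hz
      have hzK : z ∈ Metric.closedBall (0:ℂ) r := Metric.ball_subset_closedBall hz
      simp only [Set.mem_setOf_eq, Function.comp, hg_def, Complex.norm_exp, Complex.neg_re]
      exact Real.exp_le_exp.2 (neg_le_neg (hz0min hzK))
    have h0ball : (0:ℂ) ∈ Metric.ball (0:ℂ) r := by simp [hr0]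
    have := Complex.eqOn_of_isPreconnected_of_isMaxOn_norm
      (convex_ball (0:ℂ) r).isPreconnected isOpen_ball hgd hz0ball hmax h0ball
    have habs : ‖g 0‖ = ‖g z0‖ := by rw [this]; rfl
    simp only [hg_def, Complex.norm_exp, Complex.neg_re, Real.exp_eq_exp, neg_inj] at habs
    rw [hp0] at habs
    linarith [hβ.2, hmin_le, habs ▸ hmin_le]
  have hz0ne : z0 ≠ 0 := by
    intro h; rw [h] at hz0r; simp at hz0r; linarith
  -- derivative of p at z0
  have hpd : HasDerivAt p (deriv p z0) z0 := (hpAt z0 hz0lt1).hasDerivAt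
  set w : ℂ := z0 * deriv p z0 with hw_def
  -- tangential derivative: Im w = 0
  have hImw : w.im = 0 := by
    set φ : ℝ → ℝ := fun t => (p (z0 * Complex.exp (t * Complex.I))).re with hφ_def
    have hγ : ∀ t : ℝ, HasDerivAt (fun t : ℝ => z0 * Complex.exp (↑t * Complex.I))
        (z0 * (Complex.exp (↑t * Complex.I) * Complex.I)) t := by
      intro t
      have h1 : HasDerivAt (fun t : ℝ => (↑t * Complex.I : ℂ)) Complex.I t := by
        simpa using (Complex.ofRealCLM.hasDerivAt (x := t)).mul_const Complex.I
      have h2 := (Complex.hasDerivAt_exp (↑t * Complex.I)).comp t h1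
      simpa [mul_comm, mul_assoc, mul_left_comm] using (h2.const_mul z0)
    have hmem : ∀ t : ℝ, z0 * Complex.exp (↑t * Complex.I) ∈ Metric.closedBall (0:ℂ) r := by
      intro t
      have hn : ‖z0 * Complex.exp (↑t * Complex.I)‖ = r := by
        rw [norm_mul, Complex.norm_exp_ofReal_mul_I,
          mul_one, hz0r]
      rw [Metric.mem_closedBall, dist_zero_right, hn]
    have hφd : HasDerivAt φ ((deriv p z0 * (z0 * Complex.I)).re) 0 := by
      have hpd' : HasDerivAt p (deriv p z0)
          ((fun t : ℝ => z0 * Complex.exp (↑t * Complex.I)) 0) := by simpa using hpd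
      have hcomp : HasDerivAt (fun t : ℝ => p (z0 * Complex.exp (↑t * Complex.I)))
          (deriv p z0 * (z0 * Complex.I)) 0 := by
        have := HasDerivAt.comp (0:ℝ) hpd' (hγ 0)
        simpa [Function.comp_def] using this
      have := Complex.reCLM.hasFDerivAt.comp_hasDerivAt 0 hcomp
      simpa [hφ_def, Function.comp_def] using this
    have hloc : IsLocalMin φ 0 := by
      apply Filter.Eventually.of_forall
      intro t
      have := hz0min (hmem t)
      simpa [hφ_def] using this
    have h0 := hloc.deriv_eq_zero
    rw [hφd.deriv] at h0
    have h1 : (w * Complex.I).re = 0 := by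
      rw [show w * Complex.I = deriv p z0 * (z0 * Complex.I) by rw [hw_def]; ring]
      exact h0
    simpa [Complex.mul_I_re, neg_eq_zero] using h1
  -- radial derivative: Re w ≤ 0
  have hRew : w.re ≤ 0 := by
    set ψ : ℝ → ℝ := fun s => (p ((s : ℂ) * z0)).re with hψ_def
    have hψd : HasDerivAt ψ w.re 1 := by
      have h1 : HasDerivAt (fun s : ℝ => ((s : ℂ) * z0)) z0 1 := by
        simpa using (Complex.ofRealCLM.hasDerivAt (x := (1:ℝ))).mul_const z0
      have hpd' : HasDerivAt p (deriv p z0) ((fun s : ℝ => ((s : ℂ) * z0)) 1) := by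
        simpa using hpd
      have hcomp : HasDerivAt (fun s : ℝ => p ((s : ℂ) * z0)) (deriv p z0 * z0) 1 := by
        have := HasDerivAt.comp (1:ℝ) hpd' h1
        simpa [Function.comp_def] using this
      have := Complex.reCLM.hasFDerivAt.comp_hasDerivAt 1 hcomp
      simpa [hψ_def, hw_def, mul_comm, Function.comp_def] using this
    have hmem : ∀ s ∈ Set.Icc (0:ℝ) 1, ((s:ℂ) * z0) ∈ Metric.closedBall (0:ℂ) r := by
      intro s hs
      have hn : ‖(s:ℂ) * z0‖ = s * r := by
        rw [norm_mul, Complex.norm_real, Real.norm_eq_abs, _root_.abs_of_nonneg hs.1, hz0r]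
      rw [Metric.mem_closedBall, dist_zero_right, hn]
      nlinarith [hs.2, hr0.le, hs.1]
    have hslope : ∀ s ∈ Set.Ioo (0:ℝ) 1, slope ψ 1 s ≤ 0 := by
      intro s hs
      have h1 : (p z0).re ≤ ψ s := hz0min (hmem s ⟨hs.1.le, hs.2.le⟩)
      rw [slope_def_field]
      have hψ1 : ψ 1 = (p z0).re := by simp [hψ_def]
      have hnum : ψ s - ψ 1 ≥ 0 := by rw [hψ1]; linarith
      have hden : s - 1 < 0 := by linarith [hs.2]
      exact div_nonpos_of_nonneg_of_nonpos hnum hden.le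
    have htend : Filter.Tendsto (slope ψ 1) (nhdsWithin 1 (Set.Iio 1)) (nhds w.re) :=
      (hasDerivAt_iff_tendsto_slope.1 hψd).mono_left
        (nhdsWithin_mono _ (fun x hx => by
          simpa using ne_of_lt (show x < 1 from hx)))
    refine le_of_tendsto htend ?_
    filter_upwards [Ioo_mem_nhdsLT_of_mem
      (Set.mem_Ioc.2 ⟨(by norm_num : (0:ℝ) < 1), le_refl (1:ℝ)⟩)] with
      s hs using hslope s hs
  -- conclude
  have hc := hcond z0 hz0lt1
  have hcre : ((1 + Complex.exp (↑α * Complex.I)) / 2).re = (1 + Real.cos α) / 2 := by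
    rw [Complex.div_re]
    simp [Complex.exp_ofReal_mul_I_re, Complex.normSq_apply]
    ring
  have hkey : (p z0 + ((1 + Complex.exp (↑α * Complex.I)) / 2) * z0 * deriv p z0).re
      = (p z0).re + ((1 + Real.cos α)/2) * w.re := by
    have : ((1 + Complex.exp (↑α * Complex.I)) / 2) * z0 * deriv p z0
        = ((1 + Complex.exp (↑α * Complex.I)) / 2) * w := by rw [hw_def]; ring
    rw [Complex.add_re, this, Complex.mul_re, hImw, hcre]
    ring
  rw [hkey] at hc
  have hcos : 0 ≤ (1 + Real.cos α) / 2 := by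
    have := Real.neg_one_le_cos α; linarith
  nlinarith [hc, hmin_le, hRew, hcos]
end

section
/- Let 0 ≤ β < 1, α ∈ (−π, π], and let f be analytic on the open unit disc Δ with f(0) = 0, f'(0) = 1, satisfying Re(f'(z) + ((1+e^{iα})/2)·z·f''(z)) > β for all z ∈ Δ. Then Re(f(z)/z) > β for all z ∈ Δ \ {0}. -/
open Complex Metric Real

theorem R_alpha_beta_f_div_z_re (β α : ℝ) (hβ : 0 ≤ β ∧ β < 1) (hα : -π < α ∧ α ≤ π)
    (f : ℂ → ℂ) (hf : DifferentiableOn ℂ f (Metric.ball (0 : ℂ) 1))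
    (hf0 : f 0 = 0) (hf1 : deriv f 0 = 1)
    (hcond : ∀ z ∈ Metric.ball (0 : ℂ) 1,
      β < (deriv f z + ((1 + Complex.exp (α * Complex.I)) / 2) * z * deriv (deriv f) z).re) :
    ∀ z ∈ Metric.ball (0 : ℂ) 1, z ≠ 0 → β < (f z / z).re := by
  set l : ℂ := (1 + Complex.exp (α * Complex.I)) / 2 with hl
  have hl_re : 0 ≤ l.re := by
    have h1 : (Complex.exp ((α:ℂ) * Complex.I)).re = Real.cos α := Complex.exp_ofReal_mul_I_re α
    have h2 : l.re = (1 + Real.cos α) / 2 := by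
      rw [hl, Complex.div_re]
      simp [h1, Complex.normSq]
      ring
    rw [h2]; have := Real.neg_one_le_cos α; linarith
  -- the analytic extension of f z / z
  set p : ℂ → ℂ := dslope f 0 with hp
  have hball : Metric.ball (0:ℂ) 1 ∈ nhds (0:ℂ) := isOpen_ball.mem_nhds (by simp)
  have hpd : DifferentiableOn ℂ p (Metric.ball (0:ℂ) 1) :=
    (Complex.differentiableOn_dslope hball).mpr hf
  have hpne : ∀ z : ℂ, z ≠ 0 → p z = f z / z := by
    intro z hz
    rw [hp, dslope_of_ne f hz]
    simp [slope, hf0, div_eq_inv_mul]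
  have hp0 : p 0 = 1 := by simp [hp, dslope_same, hf1]
  intro z₁ hz₁ hz₁0
  by_contra hcon
  push_neg at hcon
  have hz₁n : ‖z₁‖ < 1 := mem_ball_zero_iff.mp hz₁
  have hpz₁ : (p z₁).re ≤ β := by rw [hpne z₁ hz₁0]; exact hcon
  -- minimal modulus point where Re p ≤ β
  set K := Metric.closedBall (0:ℂ) ‖z₁‖ with hK
  have hKsub : K ⊆ Metric.ball (0:ℂ) 1 := closedBall_subset_ball hz₁n
  have hKc : IsCompact K := isCompact_closedBall _ _
  set S := {z ∈ K | (p z).re ≤ β} with hS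
  have hSclosed : IsClosed S := by
    have hc : ContinuousOn (fun z => (p z).re) K :=
      Complex.continuous_re.comp_continuousOn ((hpd.continuousOn).mono hKsub)
    have h2 : S = K ∩ (fun z => (p z).re) ⁻¹' Set.Iic β := by
      ext z; simp [hS, Set.mem_sep_iff]
    rw [h2]
    exact hc.preimage_isClosed_of_isClosed Metric.isClosed_closedBall isClosed_Iic
  have hSc : IsCompact S := hKc.of_isClosed_subset hSclosed (Set.sep_subset _ _)
  have hz₁S : z₁ ∈ S := ⟨Metric.mem_closedBall.2 (by simp [Complex.dist_eq]), hpz₁⟩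
  obtain ⟨z₀, hz₀S, hmin'⟩ := hSc.exists_isMinOn ⟨z₁, hz₁S⟩ (continuous_norm.continuousOn)
  have hmin : ∀ z ∈ S, ‖z₀‖ ≤ ‖z‖ := fun z hz => hmin' hz
  have hr₀z₁ : ‖z₀‖ ≤ ‖z₁‖ := hmin z₁ hz₁S
  have hr₀1 : ‖z₀‖ < 1 := lt_of_le_of_lt hr₀z₁ hz₁n
  have hz₀ball : z₀ ∈ Metric.ball (0:ℂ) 1 := mem_ball_zero_iff.mpr hr₀1
  have hz₀ne : z₀ ≠ 0 := by
    intro h0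
    have := hz₀S.2
    rw [h0, hp0] at this
    simp at this
    linarith [hβ.2]
  have hr₀pos : 0 < ‖z₀‖ := norm_pos_iff.mpr hz₀ne
  -- strict inequality inside radius ‖z₀‖
  have hlt : ∀ w : ℂ, ‖w‖ < ‖z₀‖ → β < (p w).re := by
    intro w hw
    by_contra hle
    push_neg at hle
    have hwK : w ∈ K := by
      rw [hK, Metric.mem_closedBall]
      simpa [Complex.dist_eq] using le_of_lt (lt_of_lt_of_le hw hr₀z₁)
    have hwS : w ∈ S := ⟨hwK, hle⟩
    exact absurd (hmin w hwS) (not_le.mpr hw)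
  -- weak inequality on closed disc of radius ‖z₀‖
  have hge : ∀ w : ℂ, ‖w‖ ≤ ‖z₀‖ → β ≤ (p w).re := by
    intro w hw
    have hwball : w ∈ Metric.ball (0:ℂ) 1 := mem_ball_zero_iff.mpr (lt_of_le_of_lt hw hr₀1)
    have hcw : ContinuousAt p w :=
      (hpd.differentiableAt (isOpen_ball.mem_nhds hwball)).continuousAt
    have T : Filter.Tendsto (fun t : ℝ => (p ((t:ℂ) * w)).re)
        (nhdsWithin 1 (Set.Iio 1)) (nhds ((p w).re)) := by
      have hT0 : Filter.Tendsto (fun t : ℝ => (t:ℂ) * w) (nhds 1) (nhds w) := by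
        have : Continuous (fun t : ℝ => (t:ℂ) * w) :=
          Complex.continuous_ofReal.mul continuous_const
        simpa using this.tendsto 1
      exact ((Complex.continuous_re.tendsto _).comp (hcw.tendsto.comp
        (hT0.mono_left nhdsWithin_le_nhds)))
    refine ge_of_tendsto T ?_
    filter_upwards [Ioo_mem_nhdsLT_of_mem (Set.mem_Ioc.2 ⟨zero_lt_one, le_refl (1:ℝ)⟩)] with t ht
    have htw : ‖(t:ℂ) * w‖ < ‖z₀‖ := by
      calc ‖(t:ℂ) * w‖ = |t| * ‖w‖ := by simp [norm_mul]
      _ ≤ t * ‖z₀‖ := by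
          rw [abs_of_pos ht.1]
          exact mul_le_mul_of_nonneg_left hw (le_of_lt ht.1)
      _ < 1 * ‖z₀‖ := by exact mul_lt_mul_of_pos_right ht.2 hr₀pos
      _ = ‖z₀‖ := one_mul _
    exact le_of_lt (hlt _ htw)
  have hpz₀re : (p z₀).re = β := le_antisymm hz₀S.2 (hge z₀ le_rfl)
  -- derivative of p at z₀
  have hdfz₀ : HasDerivAt f (deriv f z₀) z₀ :=
    (hf.differentiableAt (isOpen_ball.mem_nhds hz₀ball)).hasDerivAt
  have hpev : (fun w => f w / w) =ᶠ[nhds z₀] p := by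
    filter_upwards [eventually_ne_nhds hz₀ne] with w hw
    exact (hpne w hw).symm
  set d : ℂ := (deriv f z₀ * z₀ - f z₀ * 1) / z₀ ^ 2 with hd
  have hpz' : HasDerivAt p d z₀ := by
    have : HasDerivAt (fun w => f w / w) d z₀ := hdfz₀.div (hasDerivAt_id z₀) hz₀ne
    exact this.congr_of_eventuallyEq hpev.symm
  -- circle derivative test : Im (d * z₀) = 0
  have hcirc : (d * (z₀ * Complex.I)).re = 0 := by
    have hc : HasDerivAt (fun s : ℂ => z₀ * Complex.exp (s * Complex.I)) (z₀ * Complex.I) 0 := by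
      have := ((hasDerivAt_mul_const (Complex.I)).cexp (x := (0:ℂ))).const_mul z₀
      simpa using this
    have hp' : HasDerivAt p d (z₀ * Complex.exp ((0:ℂ) * Complex.I)) := by simpa using hpz'
    have hF : HasDerivAt (fun s : ℂ => p (z₀ * Complex.exp (s * Complex.I)))
        (d * (z₀ * Complex.I)) 0 := hp'.comp 0 hc
    have hψ : HasDerivAt (fun θ : ℝ => (p (z₀ * Complex.exp (θ * Complex.I))).re)
        ((d * (z₀ * Complex.I)).re) 0 :=
      Complex.reCLM.hasFDerivAt.comp_hasDerivAt 0 hF.comp_ofReal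
    have hlm : IsLocalMin (fun θ : ℝ => (p (z₀ * Complex.exp (θ * Complex.I))).re) 0 := by
      apply Filter.Eventually.of_forall
      intro θ
      show (p (z₀ * Complex.exp (((0:ℝ):ℂ) * Complex.I))).re ≤
        (p (z₀ * Complex.exp ((θ:ℂ) * Complex.I))).re
      have h0 : (p (z₀ * Complex.exp (((0:ℝ):ℂ) * Complex.I))).re = β := by
        simpa using hpz₀re
      rw [h0]
      apply hge
      rw [norm_mul]
      simp [Complex.norm_exp]
    exact hlm.hasDerivAt_eq_zero hψ
  -- radial derivative test : Re (d * z₀) ≤ 0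
  have hrad : (d * z₀).re ≤ 0 := by
    have hc : HasDerivAt (fun s : ℂ => s * z₀) z₀ (1:ℂ) := hasDerivAt_mul_const z₀
    have hp' : HasDerivAt p d ((1:ℂ) * z₀) := by simpa using hpz'
    have hF : HasDerivAt (fun s : ℂ => p (s * z₀)) (d * z₀) 1 := hp'.comp 1 hc
    have hφ : HasDerivAt (fun t : ℝ => (p ((t:ℂ) * z₀)).re) ((d * z₀).re) 1 :=
      Complex.reCLM.hasFDerivAt.comp_hasDerivAt 1 hF.comp_ofReal
    have T : Filter.Tendsto (slope (fun t : ℝ => (p ((t:ℂ) * z₀)).re) 1)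
        (nhdsWithin 1 (Set.Iio 1)) (nhds ((d * z₀).re)) :=
      (hasDerivAt_iff_tendsto_slope.mp hφ).mono_left
        (nhdsWithin_mono 1 (fun x hx => Set.mem_compl_singleton_iff.2 (ne_of_lt hx)))
    refine le_of_tendsto T ?_
    filter_upwards [Ioo_mem_nhdsLT_of_mem (Set.mem_Ioc.2 ⟨zero_lt_one, le_refl (1:ℝ)⟩)] with t ht
    have h1 : (p (((1:ℝ):ℂ) * z₀)).re ≤ (p ((t:ℂ) * z₀)).re := by
      have hb : (p (((1:ℝ):ℂ) * z₀)).re = β := by simpa using hpz₀re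
      rw [hb]
      apply hge
      rw [norm_mul]
      calc ‖((t:ℝ):ℂ)‖ * ‖z₀‖ = |t| * ‖z₀‖ := by simp
      _ ≤ 1 * ‖z₀‖ := by
          apply mul_le_mul_of_nonneg_right _ (norm_nonneg _)
          rw [abs_of_pos ht.1]; exact le_of_lt ht.2
      _ = ‖z₀‖ := one_mul _
    rw [slope_def_field]
    exact div_nonpos_of_nonneg_of_nonpos (by linarith) (by linarith [ht.2])
  -- the integral lower bound
  have hA : AnalyticOnNhd ℂ f (Metric.ball (0:ℂ) 1) := hf.analyticOnNhd isOpen_ball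
  have hA1 : AnalyticOnNhd ℂ (deriv f) (Metric.ball (0:ℂ) 1) := hA.deriv
  set h : ℂ → ℂ := fun u => deriv f u + l * u * deriv (deriv f) u with hh
  set G : ℂ → ℂ := fun u => l * u * deriv f u + (1 - l) * f u with hG
  have hGd : ∀ w ∈ Metric.ball (0:ℂ) 1, HasDerivAt G (h w) w := by
    intro w hw
    have hdf : HasDerivAt f (deriv f w) w := ((hA w hw).differentiableAt).hasDerivAt
    have hdf2 : HasDerivAt (deriv f) (deriv (deriv f) w) w := ((hA1 w hw).differentiableAt).hasDerivAt
    have h1 := (((hasDerivAt_id w).const_mul l).mul hdf2).add (hdf.const_mul (1 - l))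
    refine h1.congr_deriv ?_
    simp [hh]; ring
  have hseg : ∀ t : ℝ, t ∈ Set.uIcc (0:ℝ) 1 → (t : ℂ) * z₀ ∈ Metric.ball (0:ℂ) 1 := by
    intro t ht
    rw [Set.uIcc_of_le zero_le_one] at ht
    rw [mem_ball_zero_iff]
    calc ‖(t:ℂ) * z₀‖ = |t| * ‖z₀‖ := by simp [norm_mul]
    _ ≤ 1 * ‖z₀‖ := by
        apply mul_le_mul_of_nonneg_right _ (norm_nonneg _)
        rw [abs_le]; exact ⟨by linarith [ht.1], ht.2⟩
    _ < 1 := by simpa using hr₀1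
  have hγ : ∀ t ∈ Set.uIcc (0:ℝ) 1,
      HasDerivAt (fun t : ℝ => G ((t:ℂ) * z₀)) (h ((t:ℂ) * z₀) * z₀) t := by
    intro t ht
    have hc : HasDerivAt (fun s : ℂ => s * z₀) z₀ (t:ℂ) := hasDerivAt_mul_const z₀
    exact (((hGd _ (hseg t ht)).comp (t:ℂ) hc).comp_ofReal)
  have hconth : ContinuousOn h (Metric.ball (0:ℂ) 1) := by
    apply ContinuousOn.add (hA1.continuousOn)
    exact (continuousOn_const.mul continuousOn_id).mul (hA1.deriv.continuousOn)
  have hcs : ContinuousOn (fun t : ℝ => h ((t:ℂ) * z₀) * z₀) (Set.uIcc (0:ℝ) 1) := by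
    apply ContinuousOn.mul _ continuousOn_const
    apply hconth.comp _ hseg
    exact (Complex.continuous_ofReal.mul continuous_const).continuousOn
  have hint : IntervalIntegrable (fun t : ℝ => h ((t:ℂ) * z₀) * z₀) MeasureTheory.volume 0 1 :=
    hcs.intervalIntegrable
  have hFTC : ∫ t in (0:ℝ)..1, h ((t:ℂ) * z₀) * z₀ = G z₀ := by
    rw [intervalIntegral.integral_eq_sub_of_hasDerivAt (fun t ht => hγ t ht) hint]
    simp [hG, hf0]
  have hdiv : ∫ t in (0:ℝ)..1, h ((t:ℂ) * z₀) = G z₀ / z₀ := by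
    rw [eq_div_iff hz₀ne, ← hFTC, ← intervalIntegral.integral_mul_const]
  have hre : (G z₀ / z₀).re = ∫ t in (0:ℝ)..1, (h ((t:ℂ) * z₀)).re := by
    rw [← hdiv]
    have hint2 : IntervalIntegrable (fun t : ℝ => h ((t:ℂ) * z₀)) MeasureTheory.volume 0 1 := by
      apply ContinuousOn.intervalIntegrable
      apply hconth.comp _ hseg
      exact (Complex.continuous_ofReal.mul continuous_const).continuousOn
    have := Complex.reCLM.intervalIntegral_comp_comm hint2
    simpa using this.symm
  have hq : ContinuousOn (fun t : ℝ => (h ((t:ℂ) * z₀)).re) (Set.Icc (0:ℝ) 1) := by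
    apply Complex.continuous_re.comp_continuousOn
    apply hconth.comp _ (by rw [← Set.uIcc_of_le zero_le_one]; exact hseg)
    exact (Complex.continuous_ofReal.mul continuous_const).continuousOn
  obtain ⟨c, hc, hcmin⟩ := (isCompact_Icc (a := (0:ℝ)) (b := 1)).exists_isMinOn
    (Set.nonempty_Icc.2 zero_le_one) hq
  have hm : β < (h ((c:ℂ) * z₀)).re :=
    hcond _ (hseg c (by rwa [Set.uIcc_of_le zero_le_one]))
  have hmono : (h ((c:ℂ) * z₀)).re ≤ ∫ t in (0:ℝ)..1, (h ((t:ℂ) * z₀)).re := by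
    have h2 : ∫ t in (0:ℝ)..1, (h ((c:ℂ) * z₀)).re = (h ((c:ℂ) * z₀)).re := by simp
    rw [← h2]
    apply intervalIntegral.integral_mono_on zero_le_one
      intervalIntegrable_const
      (hq.intervalIntegrable_of_Icc zero_le_one)
    exact fun x hx => hcmin hx
  have hkey : β < (G z₀ / z₀).re := by rw [hre]; exact lt_of_lt_of_le hm hmono
  -- the upper bound from the minimum principle
  have hGval : G z₀ / z₀ = p z₀ + l * (d * z₀) := by
    rw [hpne z₀ hz₀ne, hd, hG]
    field_simp
    ring
  have him : (d * z₀).im = 0 := by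
    have : (d * (z₀ * Complex.I)).re = -(d * z₀).im := by
      rw [show d * (z₀ * Complex.I) = (d * z₀) * Complex.I by ring]
      simp [Complex.mul_re]
    rw [this] at hcirc
    linarith
  have hub : (G z₀ / z₀).re ≤ β := by
    rw [hGval]
    have h1 : (p z₀ + l * (d * z₀)).re = β + (l.re * (d * z₀).re - l.im * (d * z₀).im) := by
      rw [Complex.add_re, hpz₀re, Complex.mul_re]
    rw [h1, him, mul_zero]
    have : l.re * (d * z₀).re ≤ 0 := mul_nonpos_of_nonneg_of_nonpos hl_re hrad
    linarith
  exact absurd hkey (not_lt.mpr hub)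
end

section
/- Let α ∈ (−π, π] and let f be analytic on the open unit disc Δ with f(0) = 0, f'(0) = 1, satisfying Re(f'(z) + ((1+e^{iα})/2)·z·f''(z)) > 0 for all z ∈ Δ. Then f is univalent (injective) on Δ. -/
open Complex Metric Real

private lemma deriv_nonpos_of_min_left {φ : ℝ → ℝ} {d : ℝ} (h : HasDerivAt φ d 1)
    (hm : ∀ t : ℝ, 0 ≤ t → t ≤ 1 → φ 1 ≤ φ t) : d ≤ 0 := by
  have hs := hasDerivAt_iff_tendsto_slope.1 h
  have hs' : Filter.Tendsto (slope φ 1) (nhdsWithin 1 (Set.Iio 1)) (nhds d) :=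
    hs.mono_left (nhdsWithin_mono 1 (fun x hx => ne_of_lt hx))
  refine le_of_tendsto hs' ?_
  have hev : ∀ᶠ t in nhdsWithin (1:ℝ) (Set.Iio 1), t ∈ Set.Ioo (0:ℝ) 1 :=
    Ioo_mem_nhdsLT_of_mem ⟨zero_lt_one, le_rfl⟩
  filter_upwards [hev] with t ht
  have h1 : φ 1 ≤ φ t := hm t ht.1.le ht.2.le
  rw [slope_def_field]
  exact div_nonpos_of_nonneg_of_nonpos (by linarith) (by linarith [ht.2])

private lemma re_deriv_pos {c : ℂ} (hc : 0 ≤ c.re) {p : ℂ → ℂ}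
    (hp : DifferentiableOn ℂ p (ball (0:ℂ) 1)) (hp0 : p 0 = 1)
    (h : ∀ z ∈ ball (0:ℂ) 1, 0 < (p z + c * z * deriv p z).re) :
    ∀ z ∈ ball (0:ℂ) 1, 0 < (p z).re := by
  by_contra hcon
  push_neg at hcon
  obtain ⟨z1, hz1, hz1le⟩ := hcon
  set R := ‖z1‖ with hR
  have hR1 : R < 1 := by simpa [mem_ball, dist_zero_right] using hz1
  have hball : closedBall (0:ℂ) R ⊆ ball (0:ℂ) 1 := closedBall_subset_ball hR1
  set S : Set ℂ := closedBall (0:ℂ) R ∩ (fun z => (p z).re) ⁻¹' (Set.Iic 0) with hSdef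
  have hScl : IsClosed S := by
    apply ContinuousOn.preimage_isClosed_of_isClosed ?_ Metric.isClosed_closedBall isClosed_Iic
    exact Complex.continuous_re.comp_continuousOn ((hp.continuousOn).mono hball)
  have hScomp : IsCompact S :=
    Metric.isCompact_of_isClosed_isBounded hScl
      ((Metric.isBounded_closedBall).subset Set.inter_subset_left)
  have hz1S : z1 ∈ S := ⟨by rw [mem_closedBall, dist_zero_right], hz1le⟩
  obtain ⟨z0, hz0S, hz0min⟩ := hScomp.exists_isMinOn ⟨z1, hz1S⟩ continuous_norm.continuousOn
  set r := ‖z0‖ with hr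
  have hrR : r ≤ R := by simpa [mem_closedBall, dist_zero_right] using hz0S.1
  have hz0ball : z0 ∈ ball (0:ℂ) 1 := hball hz0S.1
  have hz0ne : z0 ≠ 0 := by
    intro h0
    have h2 : (p z0).re ≤ 0 := hz0S.2
    rw [h0, hp0] at h2
    norm_num at h2
  have hr0 : 0 < r := norm_pos_iff.2 hz0ne
  have claim1 : ∀ z : ℂ, ‖z‖ < r → 0 < (p z).re := by
    intro z hz
    by_contra hle
    push_neg at hle
    have hzS : z ∈ S := ⟨by simp only [mem_closedBall, dist_zero_right]; linarith, hle⟩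
    have h2 := hz0min hzS
    simp only [Set.mem_setOf_eq] at h2
    exact absurd h2 (not_le.2 hz)
  have claim3 : ∀ w : ℂ, ‖w‖ = r → 0 ≤ (p w).re := by
    intro w hw
    by_contra hneg
    push_neg at hneg
    have hwball : w ∈ ball (0:ℂ) 1 := by
      rw [mem_ball, dist_zero_right, hw]; exact lt_of_le_of_lt hrR hR1
    have hcontw : ContinuousAt (fun z => (p z).re) w :=
      Complex.continuous_re.continuousAt.comp
        ((hp.differentiableAt (isOpen_ball.mem_nhds hwball)).continuousAt)
    have hray : Filter.Tendsto (fun t : ℝ => (p ((t:ℂ) * w)).re)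
        (nhdsWithin 1 (Set.Iio 1)) (nhds ((p w).re)) := by
      have h1 : Filter.Tendsto (fun t : ℝ => (t:ℂ) * w) (nhdsWithin 1 (Set.Iio 1)) (nhds w) := by
        have hc2 : Continuous (fun t : ℝ => (t:ℂ) * w) :=
          Complex.continuous_ofReal.mul continuous_const
        have h2 : nhdsWithin (1:ℝ) (Set.Iio 1) ≤ nhds 1 := nhdsWithin_le_nhds
        have := (hc2.tendsto 1).mono_left h2
        simpa using this
      exact hcontw.tendsto.comp h1
    have hev : ∀ᶠ t : ℝ in nhdsWithin (1:ℝ) (Set.Iio 1), (p (((t:ℝ):ℂ) * w)).re < 0 :=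
      Filter.Tendsto.eventually_lt_const hneg hray
    have hev2 : ∀ᶠ t in nhdsWithin (1:ℝ) (Set.Iio 1), t ∈ Set.Ioo (0:ℝ) 1 :=
      Ioo_mem_nhdsLT_of_mem ⟨zero_lt_one, le_rfl⟩
    obtain ⟨t, h1, h2⟩ := (hev.and hev2).exists
    have hlt : ‖(t:ℂ) * w‖ < r := by
      rw [norm_mul, Complex.norm_real, Real.norm_eq_abs, _root_.abs_of_pos h2.1, hw]
      exact mul_lt_of_lt_one_left hr0 h2.2
    exact absurd (claim1 _ hlt) (not_lt.2 h1.le)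
  have claim2 : (p z0).re = 0 := le_antisymm hz0S.2 (claim3 z0 rfl)
  set d := deriv p z0 with hd
  have hder : HasDerivAt p d z0 :=
    (hp.differentiableAt (isOpen_ball.mem_nhds hz0ball)).hasDerivAt
  -- radial derivative: Re (d * z0) ≤ 0
  have hradle : (d * z0).re ≤ 0 := by
    have hinner : HasDerivAt (fun ζ : ℂ => ζ * z0) ((1:ℂ) * z0) 1 :=
      (hasDerivAt_id (1:ℂ)).mul_const z0
    have he1 : HasDerivAt (fun ζ : ℂ => p (ζ * z0)) (d * z0) (((1:ℝ):ℂ)) := by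
      have hder1 : HasDerivAt p d ((1:ℂ) * z0) := by rwa [one_mul]
      have := HasDerivAt.comp (1:ℂ) hder1 hinner
      simpa [Function.comp_def] using this
    have hrad : HasDerivAt (fun t : ℝ => (p ((t:ℂ) * z0)).re) ((d * z0).re) 1 :=
      he1.real_of_complex
    apply deriv_nonpos_of_min_left hrad
    intro t ht0 ht1
    have h1 : (p (((1:ℝ):ℂ) * z0)).re = 0 := by rw [Complex.ofReal_one, one_mul]; exact claim2
    rcases eq_or_lt_of_le ht1 with rfl | htlt
    · simp
    · have hlt : ‖(t:ℂ) * z0‖ < r := by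
        rw [norm_mul, Complex.norm_real, Real.norm_eq_abs, _root_.abs_of_nonneg ht0]
        exact mul_lt_of_lt_one_left hr0 htlt
      have := claim1 _ hlt
      rw [h1]
      linarith
  -- tangential derivative: Im (d * z0) = 0
  have htanzero : (d * z0 * Complex.I).re = 0 := by
    have hinner : HasDerivAt (fun ζ : ℂ => z0 * Complex.exp (ζ * Complex.I))
        (z0 * (Complex.exp ((0:ℂ) * Complex.I) * ((1:ℂ) * Complex.I))) 0 := by
      have h1 : HasDerivAt (fun ζ : ℂ => ζ * Complex.I) ((1:ℂ) * Complex.I) 0 :=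
        (hasDerivAt_id (0:ℂ)).mul_const Complex.I
      have h2 : HasDerivAt (fun ζ : ℂ => Complex.exp (ζ * Complex.I))
          (Complex.exp ((0:ℂ) * Complex.I) * ((1:ℂ) * Complex.I)) 0 :=
        HasDerivAt.comp (0:ℂ) (Complex.hasDerivAt_exp ((0:ℂ) * Complex.I)) h1
      exact h2.const_mul z0
    have he2 : HasDerivAt (fun ζ : ℂ => p (z0 * Complex.exp (ζ * Complex.I)))
        (d * (z0 * Complex.I)) (((0:ℝ):ℂ)) := by
      have hder' : HasDerivAt p d (z0 * Complex.exp ((0:ℂ) * Complex.I)) := by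
        simpa using hder
      have := HasDerivAt.comp (0:ℂ) hder' hinner
      simpa [Function.comp_def] using this
    have htan : HasDerivAt (fun θ : ℝ => (p (z0 * Complex.exp ((θ:ℂ) * Complex.I))).re)
        ((d * (z0 * Complex.I)).re) 0 := he2.real_of_complex
    have hmin : IsLocalMin (fun θ : ℝ => (p (z0 * Complex.exp ((θ:ℂ) * Complex.I))).re) 0 := by
      apply Filter.Eventually.of_forall
      intro θ
      have hnorm : ‖z0 * Complex.exp ((θ:ℂ) * Complex.I)‖ = r := by
        rw [norm_mul, Complex.norm_exp_ofReal_mul_I, mul_one]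
      have h0 : (p (z0 * Complex.exp (((0:ℝ):ℂ) * Complex.I))).re = 0 := by
        simp only [Complex.ofReal_zero, zero_mul, Complex.exp_zero, mul_one]
        exact claim2
      show (p (z0 * Complex.exp (((0:ℝ):ℂ) * Complex.I))).re
        ≤ (p (z0 * Complex.exp ((θ:ℂ) * Complex.I))).re
      rw [h0]
      exact claim3 _ hnorm
    have := hmin.hasDerivAt_eq_zero htan
    rw [← mul_assoc] at this
    exact this
  -- contradiction with the hypothesis at z0
  have hq := h z0 hz0ball
  have him : (d * z0).im = 0 := by
    have : (d * z0 * Complex.I).re = -((d * z0).im) := by simp [Complex.mul_re]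
    rw [this] at htanzero
    linarith
  have hczd : (c * z0 * deriv p z0).re ≤ 0 := by
    have hrw : c * z0 * deriv p z0 = c * (d * z0) := by rw [← hd]; ring
    rw [hrw, Complex.mul_re, him, mul_zero, sub_zero]
    exact mul_nonpos_of_nonneg_of_nonpos hc hradle
  rw [Complex.add_re, claim2, zero_add] at hq
  linarith

private lemma njw {f : ℂ → ℂ} (hf : DifferentiableOn ℂ f (ball (0:ℂ) 1))
    (h : ∀ z ∈ ball (0:ℂ) 1, 0 < (deriv f z).re) : Set.InjOn f (ball (0:ℂ) 1) := by
  intro z hz w hw hfeq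
  by_contra hne
  set γ : ℝ → ℂ := fun t => z + (t:ℂ) * (w - z) with hγ
  have hmem : ∀ t : ℝ, 0 ≤ t → t ≤ 1 → γ t ∈ ball (0:ℂ) 1 := by
    intro t ht0 ht1
    have := (convex_ball (0:ℂ) 1).add_smul_sub_mem hz hw ⟨ht0, ht1⟩
    simpa [hγ, Complex.real_smul] using this
  have hderiv : ∀ t ∈ Set.uIcc (0:ℝ) 1,
      HasDerivAt (fun s : ℝ => f (γ s)) (deriv f (γ t) * (w - z)) t := by
    intro t ht
    rw [Set.uIcc_of_le zero_le_one] at ht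
    have hmem' := hmem t ht.1 ht.2
    have hdf : HasDerivAt f (deriv f (γ t)) (z + ((t:ℝ):ℂ) * (w - z)) :=
      (hf.differentiableAt (isOpen_ball.mem_nhds hmem')).hasDerivAt
    have hinner : HasDerivAt (fun ζ : ℂ => z + ζ * (w - z)) ((1:ℂ) * (w - z)) ((t:ℝ):ℂ) :=
      ((hasDerivAt_id ((t:ℝ):ℂ)).mul_const (w - z)).const_add z
    have hcomp := (HasDerivAt.comp ((t:ℝ):ℂ) hdf hinner).comp_ofReal
    simpa [hγ, Function.comp, mul_one] using hcomp
  have hcont0 : ContinuousOn (fun t : ℝ => deriv f (γ t)) (Set.uIcc (0:ℝ) 1) := by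
    have hdc : DifferentiableOn ℂ (deriv f) (ball (0:ℂ) 1) :=
      ((hf.analyticOnNhd isOpen_ball).deriv).differentiableOn
    apply hdc.continuousOn.comp
    · exact (continuous_const.add (Complex.continuous_ofReal.mul continuous_const)).continuousOn
    · intro t ht
      rw [Set.uIcc_of_le zero_le_one] at ht
      exact hmem t ht.1 ht.2
  have hcont : ContinuousOn (fun t : ℝ => deriv f (γ t) * (w - z)) (Set.uIcc (0:ℝ) 1) :=
    hcont0.mul continuousOn_const
  have hint : IntervalIntegrable (fun t : ℝ => deriv f (γ t) * (w - z))
      MeasureTheory.volume 0 1 := hcont.intervalIntegrable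
  have heq := intervalIntegral.integral_eq_sub_of_hasDerivAt hderiv hint
  have hγ1 : γ 1 = w := by simp [hγ]
  have hγ0 : γ 0 = z := by simp [hγ]
  rw [hγ1, hγ0, ← hfeq, sub_self, intervalIntegral.integral_mul_const] at heq
  have hwz : w - z ≠ 0 := sub_ne_zero.2 (Ne.symm hne)
  have hI0 : (∫ t in (0:ℝ)..1, deriv f (γ t)) = 0 := by
    rcases mul_eq_zero.1 heq with h' | h'
    · exact h'
    · exact absurd h' hwz
  have hint2 : IntervalIntegrable (fun t : ℝ => deriv f (γ t)) MeasureTheory.volume 0 1 :=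
    hcont0.intervalIntegrable
  have hre := Complex.reCLM.intervalIntegral_comp_comm hint2
  have hpos : 0 < ∫ t in (0:ℝ)..1, (deriv f (γ t)).re := by
    apply intervalIntegral.intervalIntegral_pos_of_pos_on
    · exact (Complex.continuous_re.comp_continuousOn hcont0).intervalIntegrable
    · intro t ht
      exact h _ (hmem t ht.1.le ht.2.le)
    · exact zero_lt_one
  have : (0:ℝ) < 0 := by
    calc (0:ℝ) < ∫ t in (0:ℝ)..1, (deriv f (γ t)).re := hpos
    _ = Complex.reCLM (∫ t in (0:ℝ)..1, deriv f (γ t)) := hre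
    _ = 0 := by rw [hI0]; simp
  exact absurd this (lt_irrefl 0)

theorem L_alpha_univalent (α : ℝ) (hα : -π < α ∧ α ≤ π)
    (f : ℂ → ℂ) (hf : DifferentiableOn ℂ f (Metric.ball (0 : ℂ) 1))
    (hf0 : f 0 = 0) (hf1 : deriv f 0 = 1)
    (hcond : ∀ z ∈ Metric.ball (0 : ℂ) 1,
      0 < (deriv f z + ((1 + Complex.exp (α * Complex.I)) / 2) * z * deriv (deriv f) z).re) :
    Set.InjOn f (Metric.ball (0 : ℂ) 1) := by
  have hp : DifferentiableOn ℂ (deriv f) (ball (0:ℂ) 1) :=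
    ((hf.analyticOnNhd isOpen_ball).deriv).differentiableOn
  have hc : 0 ≤ (((1:ℂ) + Complex.exp (α * Complex.I)) / 2).re := by
    have h1 : (((1:ℂ) + Complex.exp (α * Complex.I)) / 2).re
        = (1 + Real.cos α) / 2 := by
      rw [show ((2:ℂ)) = ((2:ℝ):ℂ) by norm_num, Complex.div_ofReal_re]
      rw [Complex.add_re, Complex.one_re]
      rw [show ((α:ℂ) * Complex.I) = ((α:ℝ):ℂ) * Complex.I from rfl,
        Complex.exp_ofReal_mul_I_re]
    rw [h1]
    have := Real.neg_one_le_cos α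
    linarith
  have hrepos := re_deriv_pos hc hp hf1 hcond
  exact njw hf hrepos
end

section
/- Let 0 ≤ β < 1, α ∈ (−π, π], and let f(z) = z + Σ_{n≥2} a_n z^n be analytic on the open unit disc with Re(f'(z) + ((1+e^{iα})/2)·z·f''(z)) > β for all |z| < 1. Then for every n ≥ 2, |a_n| ≤ 4(1−β) / (n·√(2[n²+1+(n²−1)cos α])). -/
open Complex Metric Real

lemma coeff_growth (a : ℕ → ℂ) (g : ℂ → ℂ)
    (h : ∀ z ∈ Metric.ball (0 : ℂ) 1, HasSum (fun n : ℕ => a n * z ^ n) (g z))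
    {r : ℝ} (hr0 : 0 ≤ r) (hr1 : r < 1) (k : ℕ) :
    Summable (fun n : ℕ => (n : ℝ) ^ k * ‖a n‖ * r ^ n) := by
  set ρ : ℝ := (r + 1) / 2 with hρ
  have hρ0 : 0 < ρ := by positivity
  have hrρ : r < ρ := by rw [hρ]; linarith
  have hρ1 : ρ < 1 := by rw [hρ]; linarith
  have hmem : (ρ : ℂ) ∈ Metric.ball (0 : ℂ) 1 := by
    simp [abs_of_pos hρ0, hρ1]
  have hs := (h _ hmem).summable
  have htend : Filter.Tendsto (fun n => ‖a n * (ρ : ℂ) ^ n‖) Filter.atTop (nhds 0) :=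
    (hs.tendsto_atTop_zero).norm.congr' (by simp) |>.mono_right (by simp)
  obtain ⟨C, hC⟩ := htend.bddAbove_range
  have hCle : ∀ n, ‖a n‖ * ρ ^ n ≤ C := by
    intro n
    have := hC ⟨n, rfl⟩
    simpa [norm_mul, norm_pow, Complex.norm_real, abs_of_pos hρ0] using this
  have hgeo : Summable (fun n : ℕ => (n : ℝ) ^ k * (r / ρ) ^ n) := by
    have : ‖r / ρ‖ < 1 := by
      rw [Real.norm_eq_abs, _root_.abs_of_nonneg (by positivity)]
      rw [div_lt_one hρ0]; exact hrρ
    exact summable_pow_mul_geometric_of_norm_lt_one k this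
  apply Summable.of_nonneg_of_le (fun n => by positivity) (fun n => ?_) (hgeo.mul_left C)
  have h1 : (n : ℝ) ^ k * ‖a n‖ * r ^ n = ((n:ℝ)^k * (r/ρ)^n) * (‖a n‖ * ρ ^ n) := by
    rw [div_pow, mul_mul_mul_comm, div_mul_cancel₀ _ (pow_ne_zero n hρ0.ne')]
  rw [h1, mul_comm C _]
  have h2 : (0:ℝ) ≤ (n:ℝ)^k * (r/ρ)^n := by positivity
  exact mul_le_mul_of_nonneg_left (hCle n) h2

lemma hasSum_deriv (a : ℕ → ℂ) (g : ℂ → ℂ)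
    (h : ∀ z ∈ Metric.ball (0 : ℂ) 1, HasSum (fun n : ℕ => a n * z ^ n) (g z)) :
    ∀ z ∈ Metric.ball (0 : ℂ) 1,
      HasSum (fun n : ℕ => ((n : ℂ) + 1) * a (n + 1) * z ^ n) (deriv g z) := by
  intro z hz
  have hz1 : ‖z‖ < 1 := by simpa [Metric.mem_ball] using hz
  set r : ℝ := (‖z‖ + 1) / 2 with hrdef
  have hr0 : 0 < r := by positivity
  have hzr : ‖z‖ < r := by rw [hrdef]; linarith
  have hr1 : r < 1 := by rw [hrdef]; linarith
  -- summable bound for derivatives on ball 0 r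
  set u : ℕ → ℝ := fun n => (n : ℝ) * ‖a n‖ * r ^ (n - 1) with hu
  have husum : Summable u := by
    have h1 := coeff_growth a g h hr0.le hr1 1
    have h2 := h1.mul_left (1 / r)
    apply h2.congr
    intro n
    match n with
    | 0 => simp [hu]
    | (m+1) =>
      rw [hu]
      simp only [pow_one]
      rw [pow_succ]
      field_simp
      simp
  have hderiv : ∀ (n : ℕ) (y : ℂ), y ∈ Metric.ball (0:ℂ) r →
      HasDerivAt (fun w => a n * w ^ n) ((n : ℂ) * a n * y ^ (n - 1)) y := by
    intro n y _
    have := (hasDerivAt_pow n y).const_mul (a n)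
    rw [show (n : ℂ) * a n * y ^ (n - 1) = a n * ((n:ℂ) * y ^ (n - 1)) by ring]; exact this
  have hbound : ∀ (n : ℕ) (y : ℂ), y ∈ Metric.ball (0:ℂ) r →
      ‖(n : ℂ) * a n * y ^ (n - 1)‖ ≤ u n := by
    intro n y hy
    have hyr : ‖y‖ ≤ r := le_of_lt (by simpa [Metric.mem_ball] using hy)
    rw [hu]
    simp only [norm_mul, norm_pow, Complex.norm_natCast]
    gcongr
  have hg0 : Summable fun n : ℕ => a n * (0:ℂ) ^ n := by
    apply summable_of_ne_finset_zero (s := {0})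
    intro n hn
    simp at hn
    simp [zero_pow hn]
  have hmem0 : (0:ℂ) ∈ Metric.ball (0:ℂ) r := by simp [hr0]
  have hmemz : z ∈ Metric.ball (0:ℂ) r := by simpa [Metric.mem_ball] using hzr
  have hd := hasDerivAt_tsum_of_isPreconnected husum Metric.isOpen_ball
    (convex_ball (0:ℂ) r).isPreconnected hderiv hbound hmem0 hg0 hmemz
  -- g equals the tsum near z
  have heq : Set.EqOn g (fun w => ∑' n, a n * w ^ n) (Metric.ball (0:ℂ) 1) := by
    intro w hw
    exact ((h w hw).tsum_eq).symm
  have hev : g =ᶠ[nhds z] (fun w => ∑' n, a n * w ^ n) :=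
    Filter.eventuallyEq_of_mem (Metric.isOpen_ball.mem_nhds hz) heq
  have hdg : HasDerivAt g (∑' n : ℕ, (n : ℂ) * a n * z ^ (n - 1)) z :=
    hd.congr_of_eventuallyEq hev
  have hsum' : Summable (fun n : ℕ => (n : ℂ) * a n * z ^ (n - 1)) := by
    apply Summable.of_norm
    exact Summable.of_nonneg_of_le (fun n => norm_nonneg _)
      (fun n => hbound n z hmemz) husum
  have hS : HasSum (fun n : ℕ => (n : ℂ) * a n * z ^ (n - 1)) (deriv g z) := by
    rw [hdg.deriv]
    exact hsum'.hasSum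
  -- shift the index by one
  have := (hasSum_nat_add_iff' (f := fun n : ℕ => (n : ℂ) * a n * z ^ (n - 1)) 1).mpr hS
  simp only [Finset.range_one, Finset.sum_singleton, Nat.cast_zero, zero_mul, sub_zero,
    Nat.cast_add, Nat.cast_one, Nat.add_sub_cancel] at this
  exact this

lemma integral_exp_int (j : ℤ) :
    ∫ θ in (0:ℝ)..(2*π), Complex.exp ((j:ℂ) * θ * I) = if j = 0 then (2*π:ℂ) else 0 := by
  rcases eq_or_ne j 0 with hj | hj
  · subst hj
    simp [intervalIntegral.integral_const, Real.pi_nonneg]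
  · rw [if_neg hj]
    have hc : ((j:ℂ) * I) ≠ 0 := by
      simp [Complex.ext_iff, hj]
    have h1 : ∀ θ : ℝ, (j:ℂ) * θ * I = ((j:ℂ) * I) * θ := by intro θ; ring
    simp_rw [h1]
    rw [integral_exp_mul_complex hc]
    have h2 : (j:ℂ) * I * ((2*π : ℝ) : ℂ) = (j:ℤ) * (2 * (π:ℂ) * I) := by push_cast; ring
    rw [h2, Complex.exp_int_mul_two_pi_mul_I]
    simp

lemma cara (β : ℝ) (b : ℕ → ℂ) (p : ℂ → ℂ) (hb0 : b 0 = 1)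
    (hp : ∀ z ∈ Metric.ball (0:ℂ) 1, HasSum (fun n : ℕ => b n * z ^ n) (p z))
    (hpc : ContinuousOn p (Metric.ball (0:ℂ) 1))
    (hre : ∀ z ∈ Metric.ball (0:ℂ) 1, β < (p z).re) :
    ∀ k : ℕ, 1 ≤ k → ‖b k‖ ≤ 2 * (1 - β) := by
  intro k hk
  have key : ∀ r : ℝ, 0 < r → r < 1 → ‖b k‖ * r ^ k ≤ 2 * (1 - β) := by
    intro r hr0 hr1
    set c : ℝ → ℂ := fun θ => (r:ℂ) * Complex.exp (θ * I) with hc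
    have habs : ∀ θ : ℝ, ‖c θ‖ = r := by
      intro θ
      simp [hc, Complex.norm_exp_ofReal_mul_I, _root_.abs_of_pos hr0]
    have hcmem : ∀ θ : ℝ, c θ ∈ Metric.ball (0:ℂ) 1 := by
      intro θ
      simp [Metric.mem_ball, Complex.dist_eq, habs θ, hr1]
    have hccont : Continuous c := by
      apply Continuous.mul continuous_const
      exact Complex.continuous_exp.comp (Complex.continuous_ofReal.mul continuous_const)
    have hpcont : Continuous fun θ => p (c θ) :=
      hpc.comp_continuous hccont hcmem
    -- summability of coefficients at radius r
    have hbs : Summable (fun n : ℕ => ‖b n‖ * r ^ n) := by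
      have := coeff_growth b p hp hr0.le hr1 0
      simpa using this
    -- the basic swap
    have swap : ∀ m : ℤ,
        HasSum (fun n : ℕ => ∫ θ in (0:ℝ)..(2*π), b n * (c θ) ^ n * Complex.exp ((m:ℂ) * θ * I))
          (∫ θ in (0:ℝ)..(2*π), p (c θ) * Complex.exp ((m:ℂ) * θ * I)) := by
      intro m
      apply intervalIntegral.hasSum_integral_of_dominated_convergence
        (bound := fun n _ => ‖b n‖ * r ^ n)
      · intro n
        apply Continuous.aestronglyMeasurable
        apply Continuous.mul (Continuous.mul continuous_const (hccont.pow n))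
        exact Complex.continuous_exp.comp
          ((continuous_const.mul Complex.continuous_ofReal).mul continuous_const)
      · intro n
        filter_upwards with θ _
        rw [norm_mul, norm_mul]
        have h1 : ‖(c θ : ℂ) ^ n‖ = r ^ n := by
          rw [norm_pow]; rw [habs θ]
        have h2 : ‖Complex.exp ((m:ℂ) * θ * I)‖ = 1 := by
          rw [Complex.norm_exp]
          simp
        rw [h1, h2, mul_one]
      · filter_upwards with θ _
        exact hbs
      · exact intervalIntegrable_const
      · filter_upwards with θ _
        exact ((hp (c θ) (hcmem θ)).mul_right _)
    -- value of each term
    have term : ∀ (m : ℤ) (n : ℕ),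
        (∫ θ in (0:ℝ)..(2*π), b n * (c θ) ^ n * Complex.exp ((m:ℂ) * θ * I))
          = b n * (r:ℂ) ^ n * (if (n:ℤ) + m = 0 then (2*π:ℂ) else 0) := by
      intro m n
      have h1 : ∀ θ : ℝ, b n * (c θ) ^ n * Complex.exp ((m:ℂ) * θ * I)
          = (b n * (r:ℂ) ^ n) * Complex.exp ((((n:ℤ) + m : ℤ):ℂ) * θ * I) := by
        intro θ
        rw [hc]
        simp only [mul_pow, ← Complex.exp_nat_mul]
        have hexp : Complex.exp ((n:ℂ) * (θ * I)) * Complex.exp ((m:ℂ) * θ * I)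
            = Complex.exp ((((n:ℤ) + m : ℤ):ℂ) * θ * I) := by
          rw [← Complex.exp_add]; congr 1; push_cast; ring
        calc b n * ((r:ℂ) ^ n * Complex.exp ((n:ℂ) * (θ * I))) * Complex.exp ((m:ℂ) * θ * I)
            = b n * (r:ℂ) ^ n * (Complex.exp ((n:ℂ) * (θ * I)) * Complex.exp ((m:ℂ) * θ * I)) := by
              ring
          _ = _ := by rw [hexp]
      simp_rw [h1]
      rw [intervalIntegral.integral_const_mul, integral_exp_int]
    -- A : integral with m = -k
    have hA : (∫ θ in (0:ℝ)..(2*π), p (c θ) * Complex.exp (((-(k:ℤ)):ℂ) * θ * I))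
        = b k * (r:ℂ) ^ k * (2*π:ℂ) := by
      have hs := swap (-(k:ℤ))
      simp_rw [term (-(k:ℤ))] at hs
      push_cast at hs ⊢
      have hs2 : HasSum (fun n : ℕ => if n = k then b k * (r:ℂ)^k * (2*π:ℂ) else 0)
          (∫ θ in (0:ℝ)..(2*π), p (c θ) * Complex.exp (((-(k:ℤ)):ℂ) * θ * I)) := by
        apply hs.congr_fun
        intro n
        by_cases hnk : n = k
        · subst hnk; simp
        · have : ((n:ℤ) + -(k:ℤ)) ≠ 0 := by omega
          rw [if_neg this, if_neg hnk, mul_zero]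
      exact hs2.unique (hasSum_ite_eq k _)
    -- D : integral with m = 0
    have hD : (∫ θ in (0:ℝ)..(2*π), p (c θ)) = (2*π:ℂ) := by
      have hs := swap 0
      simp_rw [term 0] at hs
      simp only [Int.cast_zero, zero_mul, Complex.exp_zero, mul_one, add_zero] at hs
      have hs2 : HasSum (fun n : ℕ => if n = 0 then (2*π:ℂ) else 0)
          (∫ θ in (0:ℝ)..(2*π), p (c θ)) := by
        apply hs.congr_fun
        intro n
        by_cases hn : n = 0
        · subst hn; simp [hb0]
        · have : ((n:ℤ)) ≠ 0 := by omega
          rw [if_neg this, if_neg hn, mul_zero]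
      exact hs2.unique (hasSum_ite_eq 0 _)
    -- conj integral is 0
    have hB : (∫ θ in (0:ℝ)..(2*π),
        (starRingEnd ℂ) (p (c θ)) * Complex.exp (((-(k:ℤ)):ℂ) * θ * I)) = 0 := by
      have swapc : HasSum (fun n : ℕ => ∫ θ in (0:ℝ)..(2*π),
            (starRingEnd ℂ) (b n * (c θ) ^ n) * Complex.exp (((-(k:ℤ)):ℂ) * θ * I))
          (∫ θ in (0:ℝ)..(2*π),
            (starRingEnd ℂ) (p (c θ)) * Complex.exp (((-(k:ℤ)):ℂ) * θ * I)) := by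
        apply intervalIntegral.hasSum_integral_of_dominated_convergence
          (bound := fun n _ => ‖b n‖ * r ^ n)
        · intro n
          apply Continuous.aestronglyMeasurable
          apply Continuous.mul
          · exact continuous_star.comp (Continuous.mul continuous_const (hccont.pow n))
          · exact Complex.continuous_exp.comp
              ((continuous_const.mul Complex.continuous_ofReal).mul continuous_const)
        · intro n
          filter_upwards with θ _
          rw [norm_mul, RCLike.norm_conj, norm_mul]
          have h1 : ‖(c θ : ℂ) ^ n‖ = r ^ n := by
            rw [norm_pow, habs θ]
          have h2 : ‖Complex.exp (((-(k:ℤ)):ℂ) * θ * I)‖ = 1 := by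
            rw [Complex.norm_exp]
            simp
          rw [h1, h2, mul_one]
        · filter_upwards with θ _
          exact hbs
        · exact intervalIntegrable_const
        · filter_upwards with θ _
          exact (((hp (c θ) (hcmem θ)).star).mul_right _)
      have termc : ∀ n : ℕ, (∫ θ in (0:ℝ)..(2*π),
          (starRingEnd ℂ) (b n * (c θ) ^ n) * Complex.exp (((-(k:ℤ)):ℂ) * θ * I)) = 0 := by
        intro n
        have h1 : ∀ θ : ℝ, (starRingEnd ℂ) (b n * (c θ) ^ n) * Complex.exp (((-(k:ℤ)):ℂ) * θ * I)
            = ((starRingEnd ℂ) (b n) * (r:ℂ) ^ n) *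
              Complex.exp ((((-(n:ℤ) - (k:ℤ)) : ℤ):ℂ) * θ * I) := by
          intro θ
          have hconjc : (starRingEnd ℂ) (c θ) = (r:ℂ) * Complex.exp (-((θ:ℂ) * I)) := by
            rw [hc]
            simp only [map_mul, Complex.conj_ofReal, ← Complex.exp_conj]
            congr 2
            simp [Complex.ext_iff]
          calc (starRingEnd ℂ) (b n * (c θ) ^ n) * Complex.exp (((-(k:ℤ)):ℂ) * θ * I)
              = (starRingEnd ℂ) (b n) * ((r:ℂ) * Complex.exp (-((θ:ℂ) * I))) ^ n *
                Complex.exp (((-(k:ℤ)):ℂ) * θ * I) := by rw [map_mul, map_pow, hconjc]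
            _ = ((starRingEnd ℂ) (b n) * (r:ℂ) ^ n) *
                (Complex.exp (-((θ:ℂ) * I)) ^ n * Complex.exp (((-(k:ℤ)):ℂ) * θ * I)) := by ring
            _ = ((starRingEnd ℂ) (b n) * (r:ℂ) ^ n) *
                Complex.exp ((((-(n:ℤ) - (k:ℤ)) : ℤ):ℂ) * θ * I) := by
                rw [← Complex.exp_nat_mul, ← Complex.exp_add]
                congr 1
                push_cast
                ring
        simp_rw [h1]
        rw [intervalIntegral.integral_const_mul, integral_exp_int]
        have : (-(n:ℤ) - (k:ℤ)) ≠ 0 := by omega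
        rw [if_neg this, mul_zero]
      simp_rw [termc] at swapc
      exact swapc.unique hasSum_zero
    -- C : plain exponential integral
    have hC : (∫ θ in (0:ℝ)..(2*π), Complex.exp (((-(k:ℤ)):ℂ) * θ * I)) = 0 := by
      have h := integral_exp_int (-(k:ℤ))
      rw [if_neg (by omega)] at h
      push_cast at h
      exact h
    -- the main integral
    set E : ℝ → ℂ := fun θ => Complex.exp (((-(k:ℤ)):ℂ) * θ * I) with hE
    have hEcont : Continuous E := by
      rw [hE]
      exact Complex.continuous_exp.comp
        ((continuous_const.mul Complex.continuous_ofReal).mul continuous_const)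
    have hEnorm : ∀ θ : ℝ, ‖E θ‖ = 1 := by
      intro θ
      rw [hE, Complex.norm_exp]
      simp
    have hpoint : ∀ θ : ℝ, (((p (c θ)).re - β : ℝ) : ℂ) * E θ
        = (1/2) * (p (c θ) * E θ) + ((1/2) * ((starRingEnd ℂ) (p (c θ)) * E θ) + (-β) * E θ) := by
      intro θ
      have h1 := Complex.add_conj (p (c θ))
      push_cast at h1
      push_cast
      linear_combination (-(E θ)/2) * h1
    have hIval : (∫ θ in (0:ℝ)..(2*π), (((p (c θ)).re - β : ℝ) : ℂ) * E θ)
        = (π : ℂ) * (b k * (r:ℂ) ^ k) := by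
      have hi1 : IntervalIntegrable (fun θ => (1/2 : ℂ) * (p (c θ) * E θ))
          MeasureTheory.volume 0 (2*π) :=
        (Continuous.intervalIntegrable (continuous_const.mul (hpcont.mul hEcont)) _ _)
      have hi2 : IntervalIntegrable (fun θ => (1/2 : ℂ) * ((starRingEnd ℂ) (p (c θ)) * E θ))
          MeasureTheory.volume 0 (2*π) :=
        (Continuous.intervalIntegrable
          (continuous_const.mul ((continuous_star.comp hpcont).mul hEcont)) _ _)
      have hi3 : IntervalIntegrable (fun θ => (-β : ℂ) * E θ) MeasureTheory.volume 0 (2*π) :=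
        (Continuous.intervalIntegrable (continuous_const.mul hEcont) _ _)
      simp_rw [hpoint]
      rw [intervalIntegral.integral_add hi1 (hi2.add hi3),
        intervalIntegral.integral_add hi2 hi3,
        intervalIntegral.integral_const_mul, intervalIntegral.integral_const_mul,
        intervalIntegral.integral_const_mul]
      rw [hE]
      rw [hA, hB, hC]
      push_cast
      ring
    -- norm bound
    have hnormbd : ‖(∫ θ in (0:ℝ)..(2*π), (((p (c θ)).re - β : ℝ) : ℂ) * E θ)‖
        ≤ 2*π - 2*π*β := by
      have h2π : (0:ℝ) ≤ 2*π := by positivity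
      have hb1 := intervalIntegral.norm_integral_le_integral_norm
        (f := fun θ => (((p (c θ)).re - β : ℝ) : ℂ) * E θ) (μ := MeasureTheory.volume) h2π
      have heqnorm : ∀ θ : ℝ, ‖(((p (c θ)).re - β : ℝ) : ℂ) * E θ‖ = (p (c θ)).re - β := by
        intro θ
        rw [norm_mul, hEnorm, mul_one, Complex.norm_real, Real.norm_eq_abs]
        exact _root_.abs_of_nonneg (by linarith [hre (c θ) (hcmem θ)])
      calc ‖(∫ θ in (0:ℝ)..(2*π), (((p (c θ)).re - β : ℝ) : ℂ) * E θ)‖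
          ≤ ∫ θ in (0:ℝ)..(2*π), ‖(((p (c θ)).re - β : ℝ) : ℂ) * E θ‖ := hb1
        _ = ∫ θ in (0:ℝ)..(2*π), ((p (c θ)).re - β) := by
            apply intervalIntegral.integral_congr
            intro θ _
            exact heqnorm θ
        _ = (∫ θ in (0:ℝ)..(2*π), (p (c θ)).re) - (∫ θ in (0:ℝ)..(2*π), (β:ℝ)) := by
            apply intervalIntegral.integral_sub
            · exact (Continuous.intervalIntegrable (Complex.continuous_re.comp hpcont) _ _)
            · exact intervalIntegrable_const
        _ = 2*π - 2*π*β := by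
            have hre_int := ContinuousLinearMap.intervalIntegral_comp_comm (μ := MeasureTheory.volume) Complex.reCLM
              (Continuous.intervalIntegrable hpcont (0:ℝ) (2*π))
            simp only [Complex.reCLM_apply] at hre_int
            rw [hre_int, hD]
            simp
    -- combine
    have hfin : π * (‖b k‖ * r ^ k) ≤ 2*π - 2*π*β := by
      have h1 : ‖(π : ℂ) * (b k * (r:ℂ) ^ k)‖ = π * (‖b k‖ * r ^ k) := by
        rw [norm_mul, norm_mul, norm_pow, Complex.norm_real, Real.norm_eq_abs,
          _root_.abs_of_nonneg Real.pi_nonneg, Complex.norm_real, Real.norm_eq_abs,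
          _root_.abs_of_pos hr0]
      calc π * (‖b k‖ * r ^ k) = ‖(π : ℂ) * (b k * (r:ℂ) ^ k)‖ := h1.symm
        _ = ‖(∫ θ in (0:ℝ)..(2*π), (((p (c θ)).re - β : ℝ) : ℂ) * E θ)‖ := by rw [hIval]
        _ ≤ 2*π - 2*π*β := hnormbd
    nlinarith [Real.pi_pos]
  -- limit r → 1
  have htend : Filter.Tendsto (fun r : ℝ => ‖b k‖ * r ^ k)
      (nhdsWithin 1 (Set.Iio 1)) (nhds (‖b k‖)) := by
    have hcont : Continuous (fun r : ℝ => ‖b k‖ * r ^ k) := by continuity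
    have := hcont.tendsto 1
    simp only [one_pow, mul_one] at this
    exact this.mono_left nhdsWithin_le_nhds
  apply le_of_tendsto htend
  filter_upwards [Ioo_mem_nhdsLT (show (0:ℝ) < 1 by norm_num)] with r hr
  exact key r hr.1 hr.2


theorem R_alpha_beta_coeff_bound (β α : ℝ) (hβ : 0 ≤ β ∧ β < 1) (hα : -π < α ∧ α ≤ π)
    (f : ℂ → ℂ) (a : ℕ → ℂ) (ha0 : a 0 = 0) (ha1 : a 1 = 1)
    (hsum : ∀ z ∈ Metric.ball (0 : ℂ) 1, HasSum (fun n : ℕ => a n * z ^ n) (f z))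
    (hf : DifferentiableOn ℂ f (Metric.ball (0 : ℂ) 1))
    (hcond : ∀ z ∈ Metric.ball (0 : ℂ) 1,
      β < (deriv f z + ((1 + Complex.exp (α * Complex.I)) / 2) * z * deriv (deriv f) z).re) :
    ∀ n : ℕ, 2 ≤ n →
      ‖a n‖ ≤ 4 * (1 - β) /
        (n * Real.sqrt (2 * ((n ^ 2 + 1) + ((n : ℝ) ^ 2 - 1) * Real.cos α))) := by
  intro n hn
  set c : ℂ := (1 + Complex.exp (α * Complex.I)) / 2 with hcdef
  set p : ℂ → ℂ := fun z => deriv f z + c * z * deriv (deriv f) z with hpdef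
  set b : ℕ → ℂ := fun m => ((m:ℂ) + 1) * a (m + 1) * (1 + (m:ℂ) * c) with hbdef
  have H1 := hasSum_deriv a f hsum
  have H2 := hasSum_deriv (fun j : ℕ => ((j:ℂ) + 1) * a (j + 1)) (deriv f) H1
  have hb0 : b 0 = 1 := by simp [hbdef, ha1]
  have hb : ∀ z ∈ Metric.ball (0:ℂ) 1, HasSum (fun m : ℕ => b m * z ^ m) (p z) := by
    intro z hz
    have h1 := H1 z hz
    have h2 := (H2 z hz).mul_left (c * z)
    set w : ℕ → ℂ := fun j => c * (j:ℂ) * ((j:ℂ) + 1) * a (j + 1) * z ^ j with hwdef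
    have h2' : HasSum (fun m : ℕ => w (m + 1)) (c * z * deriv (deriv f) z) := by
      apply h2.congr_fun
      intro m
      rw [hwdef]
      push_cast
      ring
    have hw : HasSum w (c * z * deriv (deriv f) z) := by
      have := (hasSum_nat_add_iff (f := w) 1).mp h2'
      simpa [hwdef] using this
    have hadd := h1.add hw
    apply hadd.congr_fun
    intro m
    rw [hwdef, hbdef]
    push_cast
    ring
  have hpc : ContinuousOn p (Metric.ball (0:ℂ) 1) := by
    have hfa : AnalyticOnNhd ℂ f (Metric.ball (0:ℂ) 1) :=
      hf.analyticOnNhd Metric.isOpen_ball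
    have hd1 : AnalyticOnNhd ℂ (deriv f) (Metric.ball (0:ℂ) 1) := hfa.deriv
    have hd2 : AnalyticOnNhd ℂ (deriv (deriv f)) (Metric.ball (0:ℂ) 1) := hd1.deriv
    exact hd1.continuousOn.add
      ((continuousOn_const.mul continuousOn_id).mul hd2.continuousOn)
  have hre : ∀ z ∈ Metric.ball (0:ℂ) 1, β < (p z).re := hcond
  have bound := cara β b p hb0 hb hpc hre
  -- specialize at m = n - 1
  set m : ℕ := n - 1 with hmdef
  have hm : m + 1 = n := by omega
  have hm1 : 1 ≤ m := by omega
  have hbm : ‖b m‖ ≤ 2 * (1 - β) := bound m hm1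
  -- compute the norm of 1 + m * c
  set s : ℝ := Real.sqrt (2 * ((n ^ 2 + 1) + ((n : ℝ) ^ 2 - 1) * Real.cos α)) with hsdef
  have hinner : (4:ℝ) ≤ 2 * ((n ^ 2 + 1) + ((n : ℝ) ^ 2 - 1) * Real.cos α) := by
    have h1 : Real.cos α ≤ 1 := Real.cos_le_one α
    have h2 : -1 ≤ Real.cos α := Real.neg_one_le_cos α
    have h3 : (1:ℝ) ≤ (n:ℝ) ^ 2 := by
      have : (1:ℝ) ≤ (n:ℝ) := by exact_mod_cast (by omega : 1 ≤ n)
      nlinarith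
    nlinarith
  have hspos : 0 < s := by
    rw [hsdef]
    apply Real.sqrt_pos.mpr
    linarith
  have hcexp : Complex.exp (α * Complex.I) = ((Real.cos α : ℝ) : ℂ) + ((Real.sin α : ℝ):ℂ) * I := by
    rw [Complex.exp_mul_I, Complex.ofReal_cos, Complex.ofReal_sin]
  have hw_eq : (1 : ℂ) + (m:ℂ) * c
      = ((1 + m * (1 + Real.cos α) / 2 : ℝ) : ℂ) + ((m * Real.sin α / 2 : ℝ) : ℂ) * I := by
    rw [hcdef, hcexp]
    push_cast
    ring
  have hnormsq : Complex.normSq ((1 : ℂ) + (m:ℂ) * c)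
      = (2 * ((n ^ 2 + 1) + ((n : ℝ) ^ 2 - 1) * Real.cos α)) / 4 := by
    rw [hw_eq, Complex.normSq_add_mul_I]
    have hnm : (n:ℝ) = (m:ℝ) + 1 := by exact_mod_cast hm.symm
    have hsc := Real.sin_sq_add_cos_sq α
    rw [hnm]
    nlinarith [hsc]
  have habsw : ‖(1 : ℂ) + (m:ℂ) * c‖ = s / 2 := by
    rw [Complex.norm_def, hnormsq, hsdef]
    rw [show (2 * ((n ^ 2 + 1) + ((n : ℝ) ^ 2 - 1) * Real.cos α)) / 4
        = (2 * ((n ^ 2 + 1) + ((n : ℝ) ^ 2 - 1) * Real.cos α)) * (1/2)^2 by ring]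
    rw [Real.sqrt_mul (by linarith) ((1/2)^2), Real.sqrt_sq (by norm_num)]
    ring
  have hbm_eq : ‖b m‖ = (n:ℝ) * ‖a n‖ * (s / 2) := by
    rw [hbdef]
    simp only
    rw [norm_mul, norm_mul]
    rw [habsw]
    have h1 : ((m:ℂ) + 1) = (n:ℂ) := by
      rw [← hm]; push_cast; ring
    rw [h1, hm]
    simp [Complex.norm_natCast]
  rw [hbm_eq] at hbm
  have hnpos : (0:ℝ) < n := by exact_mod_cast (by omega : 0 < n)
  rw [le_div_iff₀ (by positivity : (0:ℝ) < n * s)]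
  nlinarith [norm_nonneg (a n)]
end

section
/- Let 0 ≤ β < 1, α ∈ (−π, π], and let f(z) = z + Σ_{n≥2} a_n z^n be analytic on the open unit disc with Re(f'(z) + ((1+e^{iα})/2)·z·f''(z)) > β for all |z| < 1. Then the second section s₂(z) = z + a₂ z² satisfies Re(s₂'(z)) > 0, hence s₂ is univalent, on the disc |z| < √(10+6cos α)/(4(1−β)). -/
open Complex Metric Real

set_option maxHeartbeats 1000000 in
theorem second_section_univalence (β α : ℝ) (hβ : 0 ≤ β ∧ β < 1) (hα : -π < α ∧ α ≤ π)
    (f : ℂ → ℂ) (a : ℕ → ℂ) (ha0 : a 0 = 0) (ha1 : a 1 = 1)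
    (hsum : ∀ z ∈ Metric.ball (0 : ℂ) 1, HasSum (fun n : ℕ => a n * z ^ n) (f z))
    (hf : DifferentiableOn ℂ f (Metric.ball (0 : ℂ) 1))
    (hcond : ∀ z ∈ Metric.ball (0 : ℂ) 1,
      β < (deriv f z + ((1 + Complex.exp (α * Complex.I)) / 2) * z * deriv (deriv f) z).re) :
    (∀ z ∈ Metric.ball (0 : ℂ) (Real.sqrt (10 + 6 * Real.cos α) / (4 * (1 - β))),
      0 < (deriv (fun w : ℂ => w + a 2 * w ^ 2) z).re) ∧
    Set.InjOn (fun w : ℂ => w + a 2 * w ^ 2)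
      (Metric.ball (0 : ℂ) (Real.sqrt (10 + 6 * Real.cos α) / (4 * (1 - β)))) := by
  obtain ⟨hβ0, hβ1⟩ := hβ
  have hu : (0:ℝ) < 1 - β := by linarith
  set S : ℝ := Real.sqrt (10 + 6 * Real.cos α) with hSdef
  have hten : (0:ℝ) < 10 + 6 * Real.cos α := by nlinarith [Real.neg_one_le_cos α]
  have hSpos : 0 < S := Real.sqrt_pos.mpr hten
  set c : ℂ := (1 + Complex.exp (↑α * Complex.I)) / 2 with hcdef
  -- power series
  set p : FormalMultilinearSeries ℂ ℂ ℂ := FormalMultilinearSeries.ofScalars ℂ a with hp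
  have hpn : ∀ (n : ℕ) (y : ℂ), (p n fun _ => y) = a n * y ^ n := fun n y => by
    rw [hp, FormalMultilinearSeries.ofScalars_apply_eq, smul_eq_mul]
  have hps : HasFPowerSeriesOnBall f p 0 1 := by
    refine ⟨?_, one_pos, ?_⟩
    · refine ENNReal.le_of_forall_nnreal_lt fun r hr => ?_
      have hr1 : (r : ℝ) < 1 := by exact_mod_cast hr
      have hrmem : ((r:ℝ):ℂ) ∈ Metric.ball (0:ℂ) 1 := by
        simp only [mem_ball_zero_iff, Complex.norm_real, Real.norm_eq_abs]
        rwa [_root_.abs_of_nonneg r.coe_nonneg]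
      have hsm : Summable fun n => a n * ((r:ℝ):ℂ) ^ n := (hsum _ hrmem).summable
      have htend := hsm.tendsto_atTop_zero.norm
      obtain ⟨C, hC⟩ := htend.bddAbove_range
      refine p.le_radius_of_bound C fun n => ?_
      have := hC ⟨n, rfl⟩
      calc ‖p n‖ * (r:ℝ) ^ n = ‖a n‖ * (r:ℝ) ^ n := by
            rw [hp, FormalMultilinearSeries.ofScalars_norm]
        _ = ‖a n * ((r:ℝ):ℂ) ^ n‖ := by
            rw [norm_mul, norm_pow, Complex.norm_real, Real.norm_eq_abs,
              _root_.abs_of_nonneg r.coe_nonneg]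
        _ ≤ C := this
    · intro y hy
      have hy' : y ∈ Metric.ball (0:ℂ) 1 := by
        rw [mem_ball_zero_iff]
        simpa [edist_zero_right, ← ENNReal.coe_one, edist_nndist,
          ← NNReal.coe_lt_coe] using hy
      simpa [hpn] using hsum y hy'
  have hpsAt : HasFPowerSeriesAt f p 0 := hps.hasFPowerSeriesAt
  have hd1 : deriv f 0 = 1 := by
    rw [hpsAt.deriv, hpn 1 1]; simp [ha1]
  have hd2 : deriv (deriv f) 0 = 2 * a 2 := by
    have h21 : deriv (deriv f) 0 = iteratedDeriv 2 f 0 := by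
      rw [iteratedDeriv_succ, iteratedDeriv_one]
    have hfact := hps.factorial_smul (1:ℂ) 2
    rw [hpn 2 1] at hfact
    rw [h21, iteratedDeriv, ← hfact]
    simp [Nat.factorial, smul_eq_mul]
  -- analyticity
  have hA : AnalyticOnNhd ℂ f (Metric.ball 0 1) := hf.analyticOnNhd isOpen_ball
  have hA1 : AnalyticOnNhd ℂ (deriv f) (Metric.ball 0 1) := hA.deriv
  have hA2 : AnalyticOnNhd ℂ (deriv (deriv f)) (Metric.ball 0 1) := hA1.deriv
  set g : ℂ → ℂ := fun z => deriv f z + c * z * deriv (deriv f) z with hgdef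
  have hAg : AnalyticOnNhd ℂ g (Metric.ball 0 1) :=
    hA1.add ((analyticOnNhd_const.mul analyticOnNhd_id).mul hA2)
  have h0mem : (0:ℂ) ∈ Metric.ball (0:ℂ) 1 := mem_ball_self one_pos
  have hg0 : g 0 = 1 := by simp [hgdef, hd1]
  -- derivative of g at 0
  have hD1 : HasDerivAt (deriv f) (2 * a 2) 0 := by
    have := (hA1 0 h0mem).differentiableAt.hasDerivAt
    rwa [hd2] at this
  have hD2 : HasDerivAt (fun z : ℂ => c * z * deriv (deriv f) z)
      (c * (2 * a 2)) 0 := by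
    have hlin : HasDerivAt (fun z : ℂ => c * z) c 0 := by
      simpa using (hasDerivAt_id (0:ℂ)).const_mul c
    have hdd := (hA2 0 h0mem).differentiableAt.hasDerivAt
    have := hlin.mul hdd
    simpa [hd2, Pi.mul_def] using this
  have hDg : HasDerivAt g (2 * a 2 * (1 + c)) 0 := by
    have := hD1.add hD2
    have e : 2 * a 2 + c * (2 * a 2) = 2 * a 2 * (1 + c) := by ring
    rw [e] at this
    exact this
  -- the Möbius transform
  set w : ℂ → ℂ := fun z => (g z - 1) / (g z + (1 - 2 * (β:ℂ))) with hwdef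
  have hgre : ∀ z ∈ Metric.ball (0:ℂ) 1, β < (g z).re := hcond
  have hden : ∀ z ∈ Metric.ball (0:ℂ) 1, g z + (1 - 2 * (β:ℂ)) ≠ 0 := by
    intro z hz h0
    have h1 : (g z + (1 - 2 * (β:ℂ))).re = (g z).re + 1 - 2 * β := by
      simp; ring
    rw [h0] at h1
    have := hgre z hz
    simp at h1
    linarith
  have hgd : DifferentiableOn ℂ g (Metric.ball 0 1) := hAg.differentiableOn
  have hwd : DifferentiableOn ℂ w (Metric.ball 0 1) :=
    (hgd.sub (differentiableOn_const 1)).div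
      (hgd.add (differentiableOn_const _)) hden
  have hw0 : w 0 = 0 := by simp [hwdef, hg0]
  have hwlt : ∀ z ∈ Metric.ball (0:ℂ) 1, ‖w z‖ < 1 := by
    intro z hz
    have hb := hgre z hz
    set x : ℝ := (g z).re
    set y : ℝ := (g z).im
    have e1 : ‖g z - 1‖ ^ 2 = (x - 1) ^ 2 + y ^ 2 := by
      rw [Complex.sq_norm, Complex.normSq_apply]
      simp [x, y]; ring
    have e2 : ‖g z + (1 - 2 * (β:ℂ))‖ ^ 2 = (x + 1 - 2 * β) ^ 2 + y ^ 2 := by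
      rw [Complex.sq_norm, Complex.normSq_apply]
      simp [x, y]; ring
    have hlt : ‖g z - 1‖ < ‖g z + (1 - 2 * (β:ℂ))‖ := by
      have h2 : ‖g z - 1‖ ^ 2 < ‖g z + (1 - 2 * (β:ℂ))‖ ^ 2 := by
        rw [e1, e2]; nlinarith
      exact lt_of_pow_lt_pow_left₀ 2 (norm_nonneg _) h2
    rw [hwdef]
    simp only [norm_div]
    rw [div_lt_one ((norm_nonneg _).lt_of_ne' (by
      simpa [norm_eq_zero] using hden z hz))]
    exact hlt
  have hmaps : Set.MapsTo w (Metric.ball (0:ℂ) 1) (Metric.ball (w 0) 1) := by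
    intro z hz
    rw [hw0, mem_ball_zero_iff]
    exact hwlt z hz
  have hschwarz := Complex.norm_deriv_le_div_of_mapsTo_ball hwd (hmaps.mono_right ball_subset_closedBall) one_pos
  -- compute deriv w 0
  have hdw : HasDerivAt w (2 * a 2 * (1 + c) / (2 - 2 * (β:ℂ))) 0 := by
    have hnum : HasDerivAt (fun z => g z - 1) (2 * a 2 * (1 + c)) 0 := hDg.sub_const 1
    have hde : HasDerivAt (fun z => g z + (1 - 2 * (β:ℂ))) (2 * a 2 * (1 + c)) 0 :=
      hDg.add_const _
    have hne : g 0 + (1 - 2 * (β:ℂ)) ≠ 0 := hden 0 h0mem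
    have := hnum.div hde hne
    have e : (2 * a 2 * (1 + c) * (g 0 + (1 - 2 * (β:ℂ))) -
        (g 0 - 1) * (2 * a 2 * (1 + c))) / (g 0 + (1 - 2 * (β:ℂ))) ^ 2
        = 2 * a 2 * (1 + c) / (2 - 2 * (β:ℂ)) := by
      rw [hg0]
      have h2 : (1:ℂ) + (1 - 2 * (β:ℂ)) = 2 - 2 * (β:ℂ) := by ring
      rw [h2]
      have hne2 : (2 - 2 * (β:ℂ)) ≠ 0 := by
        intro h0
        have h5 : ((2 - 2 * β : ℝ) : ℂ) = 0 := by push_cast; linear_combination h0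
        have := Complex.ofReal_eq_zero.mp h5
        linarith
      rw [div_eq_div_iff (pow_ne_zero 2 hne2) hne2]
      ring
    rw [e] at this
    exact this
  have hderiv_w : deriv w 0 = 2 * a 2 * (1 + c) / (2 - 2 * (β:ℂ)) := hdw.deriv
  -- norm bound
  have hnormc : ‖(1:ℂ) + c‖ = S / 2 := by
    have e1 : (1:ℂ) + c = (3 + Complex.exp (↑α * Complex.I)) / 2 := by
      rw [hcdef]; ring
    have e2 : (3:ℂ) + Complex.exp (↑α * Complex.I)
        = ((3 + Real.cos α : ℝ) : ℂ) + ((Real.sin α : ℝ) : ℂ) * Complex.I := by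
      rw [Complex.exp_mul_I, ← Complex.ofReal_cos, ← Complex.ofReal_sin]
      push_cast
      ring
    rw [e1, norm_div, e2]
    rw [Complex.norm_add_mul_I]
    have : (3 + Real.cos α) ^ 2 + Real.sin α ^ 2 = 10 + 6 * Real.cos α := by
      nlinarith [Real.sin_sq_add_cos_sq α]
    rw [this]
    norm_num
    exact hSdef.symm
  have hne2 : ‖(2:ℂ) - 2 * (β:ℂ)‖ = 2 - 2 * β := by
    have : (2:ℂ) - 2 * (β:ℂ) = ((2 - 2 * β : ℝ) : ℂ) := by push_cast; ring
    rw [this, Complex.norm_real, Real.norm_eq_abs, abs_of_pos (by linarith)]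
  have key : ‖a 2‖ * S ≤ 2 * (1 - β) := by
    rw [hderiv_w] at hschwarz
    rw [norm_div, hne2, norm_mul, norm_mul, hnormc] at hschwarz
    have : ‖(2:ℂ)‖ = 2 := by norm_num
    rw [this] at hschwarz
    rw [div_le_iff₀ (by linarith)] at hschwarz
    nlinarith
  -- now the conclusion
  set K : ℝ := ‖a 2‖ with hKdef
  have hK0 : 0 ≤ K := norm_nonneg _
  constructor
  · intro z hz
    rw [mem_ball_zero_iff] at hz
    have hder : deriv (fun w : ℂ => w + a 2 * w ^ 2) z = 1 + a 2 * (2 * z) := by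
      have h1 : HasDerivAt (fun w : ℂ => w + a 2 * w ^ 2) (1 + a 2 * (2 * z)) z := by
        have := (hasDerivAt_id z).add (((hasDerivAt_pow 2 z)).const_mul (a 2))
        simpa [Pi.add_def] using this
      exact h1.deriv
    rw [hder]
    have hnz : ‖a 2 * (2 * z)‖ = 2 * K * ‖z‖ := by
      simp [norm_mul, hKdef]; ring
    have hre : (a 2 * (2 * z)).re ≥ -(2 * K * ‖z‖) := by
      rw [← hnz]
      have h1 := Complex.abs_re_le_norm (a 2 * (2 * z))
      cases abs_le.mp h1 with
      | intro h _ => linarith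
    have hsmall : 2 * K * ‖z‖ < 1 := by
      rcases eq_or_lt_of_le hK0 with h | h
      · rw [← h]; norm_num
      · have h1 : ‖z‖ < S / (4 * (1 - β)) := hz
        have h2 : 2 * K * ‖z‖ < 2 * K * (S / (4 * (1 - β))) := by
          apply mul_lt_mul_of_pos_left h1 (by linarith)
        have h3 : 2 * K * (S / (4 * (1 - β))) ≤ 1 := by
          have h4 : 2 * K * (S / (4 * (1 - β))) = (K * S) / (2 * (1 - β)) := by
            field_simp; ring
          rw [h4, div_le_one (by linarith)]
          linarith [key]
        linarith
    have : (1 + a 2 * (2 * z)).re = 1 + (a 2 * (2 * z)).re := by simp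
    rw [this]
    linarith
  · intro x hx y hy hxy
    rw [mem_ball_zero_iff] at hx hy
    have hxy' : x + a 2 * x ^ 2 = y + a 2 * y ^ 2 := hxy
    have hfac : (x - y) * (1 + a 2 * (x + y)) = 0 := by linear_combination hxy'
    have hsmall : ‖a 2 * (x + y)‖ < 1 := by
      have h1 : ‖a 2 * (x + y)‖ ≤ K * (‖x‖ + ‖y‖) := by
        rw [norm_mul]
        exact mul_le_mul_of_nonneg_left (norm_add_le x y) hK0
      rcases eq_or_lt_of_le hK0 with h | h
      · calc ‖a 2 * (x + y)‖ ≤ K * (‖x‖ + ‖y‖) := h1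
          _ = 0 := by rw [← h]; ring
          _ < 1 := one_pos
      · have h2 : K * (‖x‖ + ‖y‖) < K * (2 * (S / (4 * (1 - β)))) := by
          apply mul_lt_mul_of_pos_left (by linarith [hx, hy]) h
        have h3 : K * (2 * (S / (4 * (1 - β)))) ≤ 1 := by
          have h4 : K * (2 * (S / (4 * (1 - β)))) = (K * S) / (2 * (1 - β)) := by
            field_simp; ring
          rw [h4, div_le_one (by linarith)]
          linarith [key]
        linarith
    have hne : (1 : ℂ) + a 2 * (x + y) ≠ 0 := by
      intro h0
      have : a 2 * (x + y) = -1 := by linear_combination h0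
      rw [this] at hsmall
      simp at hsmall
    have := mul_eq_zero.mp hfac
    rcases this with h | h
    · exact sub_eq_zero.mp h
    · exact absurd h hne
end

section
/- Let 0 ≤ β < 1, α ∈ (−π, π], and define f_x for |x| = 1 by f_x(z) = z + 4(1−β) Σ_{n≥2} x^{n−1} z^n / (n[n+1+(n−1)e^{iα}]). Then f_x is analytic on the open unit disc and satisfies f_x'(z) + ((1+e^{iα})/2)·z·f_x''(z) = (1 + (1−2β)xz)/(1 − xz) for all |z| < 1; in particular Re(f_x'(z) + ((1+e^{iα})/2) z f_x''(z)) > β on Δ. -/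
open Complex Metric Real
noncomputable def EFtt (x e : ℂ) (n : ℕ) (z : ℂ) : ℂ :=
  x ^ (n + 1) * z ^ (n + 2) /
    (((n : ℂ) + 2) * (((n : ℂ) + 2) + 1 + (((n : ℂ) + 2) - 1) * e))

noncomputable def EFtt1 (x e : ℂ) (n : ℕ) (z : ℂ) : ℂ :=
  ((n : ℂ) + 2) * x ^ (n + 1) * z ^ (n + 1) /
    (((n : ℂ) + 2) * (((n : ℂ) + 2) + 1 + (((n : ℂ) + 2) - 1) * e))

noncomputable def EFtt2 (x e : ℂ) (n : ℕ) (z : ℂ) : ℂ :=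
  ((n : ℂ) + 2) * ((n : ℂ) + 1) * x ^ (n + 1) * z ^ n /
    (((n : ℂ) + 2) * (((n : ℂ) + 2) + 1 + (((n : ℂ) + 2) - 1) * e))

noncomputable def EFgg (x e : ℂ) (z : ℂ) : ℂ := ∑' n : ℕ, EFtt x e n z
noncomputable def EFgg1 (x e : ℂ) (z : ℂ) : ℂ := ∑' n : ℕ, EFtt1 x e n z

lemma EFden_ge (e : ℂ) (he : ‖e‖ = 1) (n : ℕ) :
    (2 : ℝ) ≤ ‖(((n : ℂ) + 2) + 1 + (((n : ℂ) + 2) - 1) * e)‖ := by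
  have h1 : ‖((n : ℂ) + 3)‖ = (n : ℝ) + 3 := by
    rw [show ((n : ℂ) + 3) = ((n + 3 : ℕ) : ℂ) by push_cast; ring, Complex.norm_natCast]
    push_cast; ring
  have h2 : ‖(((n : ℂ) + 1) * e)‖ = (n : ℝ) + 1 := by
    rw [norm_mul, he, mul_one, show ((n : ℂ) + 1) = ((n + 1 : ℕ) : ℂ) by push_cast; ring,
      Complex.norm_natCast]
    push_cast; ring
  have h3 := norm_sub_norm_le ((n : ℂ) + 3) (-(((n : ℂ) + 1) * e))
  rw [sub_neg_eq_add, norm_neg] at h3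
  have h4 : ‖((n : ℂ) + 3 + ((n : ℂ) + 1) * e)‖
      = ‖(((n : ℂ) + 2) + 1 + (((n : ℂ) + 2) - 1) * e)‖ := by
    congr 1; ring
  rw [h1, h2, h4] at h3
  linarith

lemma EFD_ge (e : ℂ) (he : ‖e‖ = 1) (n : ℕ) :
    (1 : ℝ) ≤ ‖(((n : ℂ) + 2) * (((n : ℂ) + 2) + 1 + (((n : ℂ) + 2) - 1) * e))‖ := by
  have h1 : ‖((n : ℂ) + 2)‖ = (n : ℝ) + 2 := by
    rw [show ((n : ℂ) + 2) = ((n + 2 : ℕ) : ℂ) by push_cast; ring, Complex.norm_natCast]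
    push_cast; ring
  rw [norm_mul, h1]
  have h2 := EFden_ge e he n
  nlinarith [Nat.cast_nonneg (α := ℝ) n]

lemma EFD_ne (e : ℂ) (he : ‖e‖ = 1) (n : ℕ) :
    (((n : ℂ) + 2) * (((n : ℂ) + 2) + 1 + (((n : ℂ) + 2) - 1) * e)) ≠ 0 := by
  intro h
  have := EFD_ge e he n
  rw [h, norm_zero] at this
  linarith

lemma EFn2_ne (n : ℕ) : ((n : ℂ) + 2) ≠ 0 := by
  rw [show ((n : ℂ) + 2) = ((n + 2 : ℕ) : ℂ) by push_cast; ring]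
  exact Nat.cast_ne_zero.mpr (by omega)

lemma EFden2_ne (e : ℂ) (he : ‖e‖ = 1) (n : ℕ) :
    (((n : ℂ) + 2) + 1 + (((n : ℂ) + 2) - 1) * e) ≠ 0 := by
  intro h
  have := EFden_ge e he n
  rw [h, norm_zero] at this
  linarith

lemma EFtt_hasDeriv (x e : ℂ) (n : ℕ) (z : ℂ) :
    HasDerivAt (fun w => EFtt x e n w) (EFtt1 x e n z) z := by
  have h := (((hasDerivAt_pow (n + 2) z).const_mul (x ^ (n + 1))).div_const
    (((n : ℂ) + 2) * (((n : ℂ) + 2) + 1 + (((n : ℂ) + 2) - 1) * e)))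
  refine h.congr_deriv ?_
  unfold EFtt1
  push_cast
  ring

lemma EFtt1_hasDeriv (x e : ℂ) (n : ℕ) (z : ℂ) :
    HasDerivAt (fun w => EFtt1 x e n w) (EFtt2 x e n z) z := by
  have h := (((hasDerivAt_pow (n + 1) z).const_mul (((n : ℂ) + 2) * x ^ (n + 1))).div_const
    (((n : ℂ) + 2) * (((n : ℂ) + 2) + 1 + (((n : ℂ) + 2) - 1) * e)))
  have heq : (fun w => ((n : ℂ) + 2) * x ^ (n + 1) * w ^ (n + 1) /
      (((n : ℂ) + 2) * (((n : ℂ) + 2) + 1 + (((n : ℂ) + 2) - 1) * e)))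
      = (fun w => ((n : ℂ) + 2) * x ^ (n + 1) * w ^ (n + 1) /
      (((n : ℂ) + 2) * (((n : ℂ) + 2) + 1 + (((n : ℂ) + 2) - 1) * e))) := rfl
  refine h.congr_deriv ?_
  unfold EFtt2
  push_cast
  ring

lemma EFbound_tt (x e : ℂ) (hx : ‖x‖ = 1) (he : ‖e‖ = 1)
    {r : ℝ} (hr0 : 0 ≤ r) (hr1 : r < 1) (n : ℕ) (w : ℂ) (hw : w ∈ ball (0 : ℂ) r) :
    ‖EFtt x e n w‖ ≤ r ^ n := by
  have hwr : ‖w‖ ≤ r := by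
    rw [mem_ball, dist_zero_right] at hw; exact hw.le
  have hnum : ‖x ^ (n + 1) * w ^ (n + 2)‖ ≤ r ^ (n + 2) := by
    rw [norm_mul, norm_pow, norm_pow, hx, one_pow,
      one_mul]
    exact pow_le_pow_left₀ (norm_nonneg w) hwr (n + 2)
  unfold EFtt
  rw [norm_div]
  calc ‖x ^ (n + 1) * w ^ (n + 2)‖ /
      ‖(((n : ℂ) + 2) * (((n : ℂ) + 2) + 1 + (((n : ℂ) + 2) - 1) * e))‖
      ≤ ‖x ^ (n + 1) * w ^ (n + 2)‖ := div_le_self (norm_nonneg _) (EFD_ge e he n)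
    _ ≤ r ^ (n + 2) := hnum
    _ ≤ r ^ n := pow_le_pow_of_le_one hr0 hr1.le (by omega)

lemma EFbound_tt1 (x e : ℂ) (hx : ‖x‖ = 1) (he : ‖e‖ = 1)
    {r : ℝ} (hr0 : 0 ≤ r) (hr1 : r < 1) (n : ℕ) (w : ℂ) (hw : w ∈ ball (0 : ℂ) r) :
    ‖EFtt1 x e n w‖ ≤ ((n : ℝ) + 2) * r ^ n := by
  have hwr : ‖w‖ ≤ r := by
    rw [mem_ball, dist_zero_right] at hw; exact hw.le
  have h1 : ‖((n : ℂ) + 2)‖ = (n : ℝ) + 2 := by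
    rw [show ((n : ℂ) + 2) = ((n + 2 : ℕ) : ℂ) by push_cast; ring, Complex.norm_natCast]
    push_cast; ring
  have hnum : ‖((n : ℂ) + 2) * x ^ (n + 1) * w ^ (n + 1)‖ ≤ ((n : ℝ) + 2) * r ^ n := by
    rw [norm_mul, norm_mul, norm_pow, norm_pow]
    rw [h1, hx, one_pow, mul_one]
    have : ‖w‖ ^ (n + 1) ≤ r ^ n := by
      calc ‖w‖ ^ (n + 1) ≤ r ^ (n + 1) :=
            pow_le_pow_left₀ (norm_nonneg w) hwr (n + 1)
        _ ≤ r ^ n := pow_le_pow_of_le_one hr0 hr1.le (by omega)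
    have hn2 : (0 : ℝ) ≤ (n : ℝ) + 2 := by positivity
    exact mul_le_mul_of_nonneg_left this hn2
  unfold EFtt1
  rw [norm_div]
  calc ‖((n : ℂ) + 2) * x ^ (n + 1) * w ^ (n + 1)‖ /
      ‖(((n : ℂ) + 2) * (((n : ℂ) + 2) + 1 + (((n : ℂ) + 2) - 1) * e))‖
      ≤ ‖((n : ℂ) + 2) * x ^ (n + 1) * w ^ (n + 1)‖ :=
        div_le_self (norm_nonneg _) (EFD_ge e he n)
    _ ≤ ((n : ℝ) + 2) * r ^ n := hnum

lemma EFsummable1 {r : ℝ} (hr0 : 0 ≤ r) (hr1 : r < 1) :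
    Summable (fun n : ℕ => ((n : ℝ) + 2) * r ^ n) := by
  have hr' : ‖r‖ < 1 := by rwa [Real.norm_eq_abs, _root_.abs_of_nonneg hr0]
  have hA := summable_pow_mul_geometric_of_norm_lt_one (R := ℝ) 1 hr'
  have hB := summable_geometric_of_lt_one hr0 hr1
  have : (fun n : ℕ => ((n : ℝ) + 2) * r ^ n)
      = fun n : ℕ => (n : ℝ) ^ 1 * r ^ n + 2 * r ^ n := by
    funext n; ring
  rw [this]
  exact hA.add (hB.mul_left 2)

lemma EFkey1 (x e : ℂ) (hx : ‖x‖ = 1) (he : ‖e‖ = 1) :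
    DifferentiableOn ℂ (EFgg x e) (ball (0 : ℂ) 1) := by
  intro z hz
  rw [mem_ball, dist_zero_right] at hz
  set r : ℝ := (‖z‖ + 1) / 2 with hr
  have hr0 : 0 ≤ r := by positivity
  have hr1 : r < 1 := by rw [hr]; linarith
  have hzr : z ∈ ball (0 : ℂ) r := by
    rw [mem_ball, dist_zero_right, hr]; linarith [norm_nonneg z]
  have hdiff : DifferentiableOn ℂ (fun w => ∑' n : ℕ, EFtt x e n w) (ball (0 : ℂ) r) :=
    differentiableOn_tsum_of_summable_norm (summable_geometric_of_lt_one hr0 hr1)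
      (fun n => fun w _ => (EFtt_hasDeriv x e n w).differentiableAt.differentiableWithinAt)
      isOpen_ball (fun n w hw => EFbound_tt x e hx he hr0 hr1 n w hw)
  exact ((hdiff.differentiableAt (isOpen_ball.mem_nhds hzr)).differentiableWithinAt)

lemma EFkey2 (x e : ℂ) (hx : ‖x‖ = 1) (he : ‖e‖ = 1)
    (z : ℂ) (hz : z ∈ ball (0 : ℂ) 1) :
    HasSum (fun n : ℕ => EFtt1 x e n z) (deriv (EFgg x e) z) := by
  rw [mem_ball, dist_zero_right] at hz
  set r : ℝ := (‖z‖ + 1) / 2 with hr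
  have hr0 : 0 ≤ r := by positivity
  have hr1 : r < 1 := by rw [hr]; linarith
  have hzr : z ∈ ball (0 : ℂ) r := by
    rw [mem_ball, dist_zero_right, hr]; linarith [norm_nonneg z]
  have h := hasSum_deriv_of_summable_norm (F := fun n => EFtt x e n)
    (summable_geometric_of_lt_one hr0 hr1)
    (fun n => fun w _ => (EFtt_hasDeriv x e n w).differentiableAt.differentiableWithinAt)
    isOpen_ball (fun n w hw => EFbound_tt x e hx he hr0 hr1 n w hw) hzr
  have heq : (fun n : ℕ => deriv (EFtt x e n) z) = fun n : ℕ => EFtt1 x e n z := by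
    funext n; exact (EFtt_hasDeriv x e n z).deriv
  rw [heq] at h
  exact h

lemma EFkey3 (x e : ℂ) (hx : ‖x‖ = 1) (he : ‖e‖ = 1) :
    DifferentiableOn ℂ (EFgg1 x e) (ball (0 : ℂ) 1) := by
  intro z hz
  rw [mem_ball, dist_zero_right] at hz
  set r : ℝ := (‖z‖ + 1) / 2 with hr
  have hr0 : 0 ≤ r := by positivity
  have hr1 : r < 1 := by rw [hr]; linarith
  have hzr : z ∈ ball (0 : ℂ) r := by
    rw [mem_ball, dist_zero_right, hr]; linarith [norm_nonneg z]
  have hdiff : DifferentiableOn ℂ (fun w => ∑' n : ℕ, EFtt1 x e n w) (ball (0 : ℂ) r) :=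
    differentiableOn_tsum_of_summable_norm (EFsummable1 hr0 hr1)
      (fun n => fun w _ => (EFtt1_hasDeriv x e n w).differentiableAt.differentiableWithinAt)
      isOpen_ball (fun n w hw => EFbound_tt1 x e hx he hr0 hr1 n w hw)
  exact ((hdiff.differentiableAt (isOpen_ball.mem_nhds hzr)).differentiableWithinAt)

lemma EFkey4 (x e : ℂ) (hx : ‖x‖ = 1) (he : ‖e‖ = 1)
    (z : ℂ) (hz : z ∈ ball (0 : ℂ) 1) :
    HasSum (fun n : ℕ => EFtt2 x e n z) (deriv (EFgg1 x e) z) := by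
  rw [mem_ball, dist_zero_right] at hz
  set r : ℝ := (‖z‖ + 1) / 2 with hr
  have hr0 : 0 ≤ r := by positivity
  have hr1 : r < 1 := by rw [hr]; linarith
  have hzr : z ∈ ball (0 : ℂ) r := by
    rw [mem_ball, dist_zero_right, hr]; linarith [norm_nonneg z]
  have h := hasSum_deriv_of_summable_norm (F := fun n => EFtt1 x e n)
    (EFsummable1 hr0 hr1)
    (fun n => fun w _ => (EFtt1_hasDeriv x e n w).differentiableAt.differentiableWithinAt)
    isOpen_ball (fun n w hw => EFbound_tt1 x e hx he hr0 hr1 n w hw) hzr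
  have heq : (fun n : ℕ => deriv (EFtt1 x e n) z) = fun n : ℕ => EFtt2 x e n z := by
    funext n; exact (EFtt1_hasDeriv x e n z).deriv
  rw [heq] at h
  exact h
lemma EFre (β : ℝ) (hβ1 : β < 1) (w : ℂ) (hw : ‖w‖ < 1) :
    β < ((1 + (1 - 2 * (β : ℂ)) * w) / (1 - w)).re := by
  have hw2 : w.re * w.re + w.im * w.im < 1 := by
    have h1 : Complex.normSq w < 1 := by
      rw [← Complex.sq_norm]
      nlinarith [norm_nonneg w]
    rwa [Complex.normSq_apply] at h1
  have hns : 0 < Complex.normSq (1 - w) := by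
    rw [Complex.normSq_pos]
    intro h
    have hw1 : w = 1 := by linear_combination -h
    rw [hw1] at hw
    simp at hw
  rw [Complex.div_re, ← add_div, lt_div_iff₀ hns]
  simp only [Complex.normSq_apply, Complex.sub_re, Complex.sub_im, Complex.one_re,
    Complex.one_im, Complex.add_re, Complex.add_im, Complex.mul_re, Complex.mul_im,
    Complex.ofReal_re, Complex.ofReal_im, Complex.re_ofNat, Complex.im_ofNat]
  nlinarith [mul_pos (sub_pos.mpr hβ1) (by nlinarith : (0:ℝ) < 1 - (w.re * w.re + w.im * w.im))]

theorem extremal_function_property (β α : ℝ) (hβ : 0 ≤ β ∧ β < 1) (hα : -π < α ∧ α ≤ π)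
    (x : ℂ) (hx : ‖x‖ = 1) :
    DifferentiableOn ℂ
      (fun z : ℂ => z + 4 * ((1 : ℂ) - β) *
        ∑' n : ℕ, x ^ (n + 1) * z ^ (n + 2) /
          (((n : ℂ) + 2) * (((n : ℂ) + 2) + 1 + (((n : ℂ) + 2) - 1) * Complex.exp (α * Complex.I))))
      (Metric.ball (0 : ℂ) 1) ∧
    ∀ z ∈ Metric.ball (0 : ℂ) 1,
      (deriv (fun z : ℂ => z + 4 * ((1 : ℂ) - β) *
          ∑' n : ℕ, x ^ (n + 1) * z ^ (n + 2) /
            (((n : ℂ) + 2) * (((n : ℂ) + 2) + 1 + (((n : ℂ) + 2) - 1) * Complex.exp (α * Complex.I)))) z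
        + ((1 + Complex.exp (α * Complex.I)) / 2) * z *
          deriv (deriv (fun z : ℂ => z + 4 * ((1 : ℂ) - β) *
            ∑' n : ℕ, x ^ (n + 1) * z ^ (n + 2) /
              (((n : ℂ) + 2) * (((n : ℂ) + 2) + 1 + (((n : ℂ) + 2) - 1) * Complex.exp (α * Complex.I))))) z
        = (1 + (1 - 2 * (β : ℂ)) * (x * z)) / (1 - x * z)) ∧
      β < ((1 + (1 - 2 * (β : ℂ)) * (x * z)) / (1 - x * z)).re := by
  obtain ⟨hβ0, hβ1⟩ := hβ
  set e := Complex.exp (α * Complex.I) with he_def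
  have he : ‖e‖ = 1 := by
    rw [he_def]
    simpa using Complex.norm_exp_ofReal_mul_I α
  have hfun : (fun z : ℂ => z + 4 * ((1 : ℂ) - β) *
      ∑' n : ℕ, x ^ (n + 1) * z ^ (n + 2) /
        (((n : ℂ) + 2) * (((n : ℂ) + 2) + 1 + (((n : ℂ) + 2) - 1) * e)))
      = fun z : ℂ => z + 4 * ((1 : ℂ) - β) * EFgg x e z := rfl
  rw [hfun]
  set C : ℂ := 4 * ((1 : ℂ) - β) with hC
  have hgat : ∀ w ∈ ball (0:ℂ) 1, DifferentiableAt ℂ (EFgg x e) w := fun w hw =>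
    (EFkey1 x e hx he).differentiableAt (isOpen_ball.mem_nhds hw)
  have hg1at : ∀ w ∈ ball (0:ℂ) 1, DifferentiableAt ℂ (EFgg1 x e) w := fun w hw =>
    (EFkey3 x e hx he).differentiableAt (isOpen_ball.mem_nhds hw)
  have hderiv_g : ∀ w ∈ ball (0:ℂ) 1, deriv (EFgg x e) w = EFgg1 x e w := fun w hw =>
    ((EFkey2 x e hx he w hw).tsum_eq).symm
  have hfderiv : ∀ w ∈ ball (0:ℂ) 1,
      deriv (fun u : ℂ => u + C * EFgg x e u) w = 1 + C * EFgg1 x e w := by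
    intro w hw
    have h1 : HasDerivAt (fun u : ℂ => u + C * EFgg x e u) (1 + C * deriv (EFgg x e) w) w :=
      (hasDerivAt_id' w).add (((hgat w hw).hasDerivAt).const_mul C)
    rw [h1.deriv, hderiv_g w hw]
  refine ⟨fun w hw => ((differentiableAt_id).add
      ((hgat w hw).const_mul C)).differentiableWithinAt, fun z hz => ?_⟩
  have hz1 : ‖z‖ < 1 := by
    rw [mem_ball, dist_zero_right] at hz
    exact hz
  have hxz : ‖(x * z)‖ < 1 := by rw [norm_mul, hx, one_mul]; exact hz1
  have hxz1 : (1 : ℂ) - x * z ≠ 0 := by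
    intro h
    have h2 : x * z = 1 := by linear_combination -h
    rw [h2] at hxz
    simp at hxz
  have hsecond : deriv (deriv (fun u : ℂ => u + C * EFgg x e u)) z
      = C * deriv (EFgg1 x e) z := by
    have hEv : deriv (fun u : ℂ => u + C * EFgg x e u) =ᶠ[nhds z]
        fun w => 1 + C * EFgg1 x e w := by
      filter_upwards [isOpen_ball.mem_nhds hz] with w hw using hfderiv w hw
    rw [hEv.deriv_eq]
    exact ((((hg1at z hz).hasDerivAt).const_mul C).const_add 1).deriv
  refine ⟨?_, EFre β hβ1 (x * z) hxz⟩
  rw [hfderiv z hz, hsecond]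
  have hS1 : HasSum (fun n : ℕ => EFtt1 x e n z) (EFgg1 x e z) := by
    have h := EFkey2 x e hx he z hz
    rwa [hderiv_g z hz] at h
  have hS2 : HasSum (fun n : ℕ => EFtt2 x e n z) (deriv (EFgg1 x e) z) :=
    EFkey4 x e hx he z hz
  have hcomb := (hS1.mul_left C).add ((hS2.mul_left C).mul_left ((1 + e) / 2 * z))
  have hterm : (fun n : ℕ => C * EFtt1 x e n z + (1 + e) / 2 * z * (C * EFtt2 x e n z))
      = fun n : ℕ => (2 * (1 - (β : ℂ))) * (x * z) ^ (n + 1) := by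
    funext n
    unfold EFtt1 EFtt2
    rw [hC]
    have h1 := EFn2_ne n
    have h2 := EFden2_ne e he n
    field_simp
    ring
  rw [hterm] at hcomb
  have hgeo : HasSum (fun n : ℕ => (2 * (1 - (β : ℂ))) * (x * z) ^ (n + 1))
      ((2 * (1 - (β : ℂ))) * (x * z * (1 - x * z)⁻¹)) := by
    have h := (hasSum_geometric_of_norm_lt_one (ξ := x * z)
      (by exact hxz)).mul_left ((2 * (1 - (β : ℂ))) * (x * z))
    have heq : (fun n : ℕ => (2 * (1 - (β : ℂ))) * (x * z) * (x * z) ^ n)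
        = fun n : ℕ => (2 * (1 - (β : ℂ))) * (x * z) ^ (n + 1) := by
      funext n; ring
    rw [heq] at h
    have hv : (2 * (1 - (β : ℂ))) * (x * z * (1 - x * z)⁻¹)
        = (2 * (1 - (β : ℂ))) * (x * z) * (1 - x * z)⁻¹ := by ring
    rw [hv]
    exact h
  have hsum := hcomb.unique hgeo
  have hR : (1 + (1 - 2 * (β : ℂ)) * (x * z)) / (1 - x * z)
      = 1 + (2 * (1 - (β : ℂ))) * (x * z * (1 - x * z)⁻¹) := by
    field_simp
    ring
  rw [hR]
  linear_combination hsum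
end

section
/- Let 0 ≤ β < 1 and α ∈ (−π, π]. The second partial sum s₂(z) = z + (2(1−β)/(3+e^{iα})) z² of the extremal function f₁ (the function f_x with x = 1) satisfies s₂'(z₀) = 0 at z₀ = −(3+e^{iα})/(4(1−β)); in particular Re(s₂'(z₀)) = 0, showing the radius √(10+6cos α)/(4(1−β)) of univalence cannot be improved for the criterion Re(s₂') > 0. -/
open Complex Real

theorem sharpness_second_section (β α : ℝ) (hβ : 0 ≤ β ∧ β < 1) (hα : -π < α ∧ α ≤ π) :
    deriv (fun z : ℂ => z + (2 * ((1 : ℂ) - β) / (3 + Complex.exp (α * Complex.I))) * z ^ 2)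
        (-(3 + Complex.exp (α * Complex.I)) / (4 * ((1 : ℂ) - β))) = 0 ∧
    (deriv (fun z : ℂ => z + (2 * ((1 : ℂ) - β) / (3 + Complex.exp (α * Complex.I))) * z ^ 2)
        (-(3 + Complex.exp (α * Complex.I)) / (4 * ((1 : ℂ) - β)))).re = 0 ∧
    ‖(-(3 + Complex.exp (α * Complex.I)) / (4 * ((1 : ℂ) - β)))‖ =
      Real.sqrt (10 + 6 * Real.cos α) / (4 * (1 - β)) := by
  obtain ⟨hβ0, hβ1⟩ := hβ
  set e : ℂ := Complex.exp (α * Complex.I) with he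
  have habs_e : ‖e‖ = 1 := by
    rw [he]; exact Complex.norm_exp_ofReal_mul_I α
  have hne : (3 : ℂ) + e ≠ 0 := by
    intro h
    have h3 : e = -3 := by linear_combination h
    rw [h3] at habs_e
    simp at habs_e
  have hbne : ((1 : ℂ) - β) ≠ 0 := by
    intro h
    have : (β : ℂ) = 1 := by linear_combination -h
    have : (β : ℝ) = 1 := by exact_mod_cast this
    linarith
  set c : ℂ := 2 * ((1 : ℂ) - β) / (3 + e) with hc
  set z₀ : ℂ := -(3 + e) / (4 * ((1 : ℂ) - β)) with hz
  have hd : HasDerivAt (fun z : ℂ => z + c * z ^ 2) (1 + c * (2 * z₀ ^ 1)) z₀ := by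
    simpa using (hasDerivAt_id z₀).fun_add ((hasDerivAt_pow 2 z₀).const_mul c)
  have hval : (1 : ℂ) + c * (2 * z₀ ^ 1) = 0 := by
    rw [hc, hz]
    field_simp
    ring
  have hderiv : deriv (fun z : ℂ => z + c * z ^ 2) z₀ = 0 := by
    rw [hd.deriv, hval]
  refine ⟨hderiv, by rw [hderiv]; simp, ?_⟩
  rw [hz]
  rw [norm_div, norm_neg]
  have h1 : ‖3 + e‖ = Real.sqrt (10 + 6 * Real.cos α) := by
    rw [Complex.norm_def, Complex.normSq_apply]
    congr 1
    have hre : (3 + e).re = 3 + Real.cos α := by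
      simp [he, Complex.exp_ofReal_mul_I_re]
    have him : (3 + e).im = Real.sin α := by
      simp [he, Complex.exp_ofReal_mul_I_im]
    rw [hre, him]
    have := Real.sin_sq_add_cos_sq α
    nlinarith [this]
  have h2 : ‖4 * ((1 : ℂ) - β)‖ = 4 * (1 - β) := by
    rw [norm_mul]
    have : ((1 : ℂ) - β) = ((1 - β : ℝ) : ℂ) := by push_cast; ring
    rw [this, Complex.norm_real, Real.norm_eq_abs, abs_of_pos (by linarith)]
    simp
  rw [h1, h2]
end
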